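/- arXiv:1507.02510 — 5 statements merged into one kernel-verified Lean document; each statement's English description precedes it below -/
import Mathlib

section
/- Let d ≥ 3 be an integer, let m ≥ 0, and let c_0, c_1, …, c_m ∈ ℂ be not all zero. Then there is no rational function g ∈ ℂ(z) satisfying g(z^d) = g(z) − Σ_{j=0}^m c_j·z/(1 − z^{d^j}). -/
open Polynomial

/-- Cofactor of `X - C ζ` in `X^n - C (ζ^n)`, with its value at `ζ`. -/
lemma geom_cofactor (ζ : ℂ) (n : ℕ) :
    ∃ u : ℂ[X], X ^ n - C (ζ ^ n) = (X - C ζ) * u ∧ u.eval ζ = n * ζ ^ (n - 1) := by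
  refine ⟨∑ i ∈ Finset.range n, X ^ i * (C ζ) ^ (n - 1 - i), ?_, ?_⟩
  · rw [mul_comm, (Commute.all _ (C ζ)).geom_sum₂_mul n, C_pow]
  · rw [eval_finset_sum]
    have h : ∀ i ∈ Finset.range n, eval ζ (X ^ i * (C ζ) ^ (n - 1 - i)) = ζ ^ (n-1) := by
      intro i hi
      rw [eval_mul, eval_pow, eval_X, eval_pow, eval_C, ← pow_add]
      congr 1
      have := Finset.mem_range.mp hi
      omega
    rw [Finset.sum_congr rfl h, Finset.sum_const, Finset.card_range, nsmul_eq_mul]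

/-- Lift a root of unity of order `N` to an `e`-th root of order `e*N`. -/
lemma order_lift (α : ℂ) (N e : ℕ) (hN : 0 < N) (he : 0 < e) (hα : orderOf α = N) :
    ∃ β : ℂ, β ^ e = α ∧ orderOf β = e * N := by
  have heN : 0 < e * N := Nat.mul_pos he hN
  haveI : NeZero (e * N) := ⟨heN.ne'⟩
  set ζ := Complex.exp (2 * Real.pi * Complex.I / (e * N)) with hζdef
  have hζ : IsPrimitiveRoot ζ (e * N) := by
    have := Complex.isPrimitiveRoot_exp (e * N) heN.ne'
    simpa using this
  have hζe : IsPrimitiveRoot (ζ ^ e) N := hζ.pow heN rfl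
  -- α is a primitive N-th root of unity
  have hαfin : IsOfFinOrder α := by
    rw [← orderOf_pos_iff, hα]; exact hN
  have hαprim : IsPrimitiveRoot α N := by
    rw [← hα]; exact IsPrimitiveRoot.orderOf α
  -- α = (ζ^e)^k with k coprime to N
  haveI : NeZero N := ⟨hN.ne'⟩
  obtain ⟨k, hk, hζk⟩ := hζe.eq_pow_of_pow_eq_one hαprim.pow_eq_one
  have hkN : Nat.Coprime k N := by
    have := (hζe.pow_iff_coprime hN k).mp (hζk ▸ hαprim)
    exact this
  -- lift k to k' coprime to e*N with k' ≡ k [MOD N]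
  obtain ⟨u, hu⟩ := ZMod.unitsMap_surjective (dvd_mul_left N e)
      (ZMod.unitOfCoprime k hkN)
  set k' := (u : ZMod (e * N)).val with hk'def
  have hk'cop : Nat.Coprime k' (e * N) := ZMod.val_coe_unit_coprime u
  have hmod : k' ≡ k [MOD N] := by
    have h1 : ((k' : ℕ) : ZMod N) = ((k : ℕ) : ZMod N) := by
      have h2 := congrArg (fun (w : (ZMod N)ˣ) => (w : ZMod N)) hu
      simp only [ZMod.unitsMap, Units.coe_map, ZMod.coe_unitOfCoprime] at h2
      rw [hk'def, ZMod.natCast_val, ← h2]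
      rfl
    exact (ZMod.natCast_eq_natCast_iff _ _ _).mp h1
  refine ⟨ζ ^ k', ?_, ?_⟩
  · have hstep : (ζ ^ e) ^ k' = (ζ ^ e) ^ k := by
      have ho : orderOf (ζ ^ e) = N := (hζe.eq_orderOf).symm
      calc (ζ ^ e) ^ k' = (ζ ^ e) ^ (k' % orderOf (ζ ^ e)) := (pow_mod_orderOf ..).symm
        _ = (ζ ^ e) ^ (k % orderOf (ζ ^ e)) := by rw [ho]; exact congrArg _ hmod
        _ = (ζ ^ e) ^ k := pow_mod_orderOf ..
    rw [← pow_mul, mul_comm k' e, pow_mul, hstep, hζk]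
  · rw [← (hζ.pow_iff_coprime heN k').mpr hk'cop |>.eq_orderOf]

lemma main_lemma (d : ℕ) (hd : 3 ≤ d) (m : ℕ) (c : ℕ → ℂ) (hcm : c m ≠ 0) :
    ¬ ∃ g : RatFunc ℂ,
        RatFunc.eval RatFunc.C (RatFunc.X ^ d) g =
          g - ∑ j ∈ Finset.range (m + 1),
            RatFunc.C (c j) * RatFunc.X / (1 - RatFunc.X ^ (d ^ j)) := by
  rintro ⟨g, hg⟩
  have hd1 : 1 < d := by omega
  have hd0 : d ≠ 0 := by omega
  set p : ℂ[X] := g.num with hpdef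
  set q : ℂ[X] := g.denom with hqdef
  set pc : ℂ[X] := p.comp (X ^ d) with hpcdef
  set qc : ℂ[X] := q.comp (X ^ d) with hqcdef
  set A : ℕ → ℂ[X] := fun j => 1 - X ^ (d ^ j) with hAdef
  set P : ℂ[X] := ∏ j ∈ Finset.range (m + 1), A j with hPdef
  set T : ℂ[X] := ∑ j ∈ Finset.range (m + 1),
      C (c j) * X * ∏ i ∈ (Finset.range (m + 1)).erase j, A i with hTdef
  have hq0 : q ≠ 0 := g.denom_ne_zero
  have hco : IsCoprime p q := g.isCoprime_num_denom
  have hqc0 : qc ≠ 0 := by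
    rw [← leadingCoeff_ne_zero, hqcdef, leadingCoeff_comp (by simp [natDegree_X_pow, hd0])]
    simp [g.monic_denom.leadingCoeff, leadingCoeff_X_pow, hq0]
  have hA0 : ∀ j, A j ≠ 0 := by
    intro j h
    have h2 := congrArg (eval 0) h
    simp [hAdef, zero_pow (pow_ne_zero j hd0)] at h2
  -- The fundamental polynomial identity
  have hE : P * (pc * q - p * qc) = -(q * qc * T) := by
    set ι : ℂ[X] →+* RatFunc ℂ := (algebraMap ℂ[X] (RatFunc ℂ)) with hιdef
    have hinj : Function.Injective ι := RatFunc.algebraMap_injective ℂ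
    have hcompι : ∀ f : ℂ[X], ι (f.comp (X ^ d)) = Polynomial.eval₂ RatFunc.C (RatFunc.X ^ d) f := by
      intro f
      have h1 : f.comp (X ^ d) = Polynomial.eval₂ Polynomial.C (X ^ d) f := rfl
      rw [h1, Polynomial.hom_eval₂]
      have h2 : ι.comp Polynomial.C = RatFunc.C := by
        ext a
        exact RatFunc.algebraMap_C a
      have h3 : ι (X ^ d) = RatFunc.X ^ d := by
        rw [map_pow, RatFunc.algebraMap_X]
      rw [h2, h3]
    have hqne : ι q ≠ 0 := RatFunc.algebraMap_ne_zero hq0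
    have hqcne : ι qc ≠ 0 := RatFunc.algebraMap_ne_zero hqc0
    have hAne : ∀ j, ι (A j) ≠ 0 := fun j => RatFunc.algebraMap_ne_zero (hA0 j)
    set S : RatFunc ℂ := ∑ j ∈ Finset.range (m + 1),
        RatFunc.C (c j) * RatFunc.X / (1 - RatFunc.X ^ d ^ j) with hSdef
    have hg' : ι pc / ι qc = ι p / ι q - S := by
      rw [hpcdef, hqcdef, hcompι, hcompι]
      rw [show (Polynomial.eval₂ RatFunc.C (RatFunc.X ^ d) p) / (Polynomial.eval₂ RatFunc.C (RatFunc.X ^ d) q) = RatFunc.eval RatFunc.C (RatFunc.X ^ d) g from rfl]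
      rw [hg, hSdef, hιdef, hpdef, hqdef, RatFunc.num_div_denom]
    have hterm : ∀ j ∈ Finset.range (m + 1),
        (RatFunc.C (c j) * RatFunc.X / (1 - RatFunc.X ^ d ^ j)) * ι P
        = ι (C (c j) * X * ∏ i ∈ (Finset.range (m + 1)).erase j, A i) := by
      intro j hj
      have h1 : (1 : RatFunc ℂ) - RatFunc.X ^ d ^ j = ι (A j) := by
        rw [hAdef]
        simp only [hιdef, map_sub, map_one, map_pow, RatFunc.algebraMap_X]
      have h2 : ι P = ι (A j) * ι (∏ i ∈ (Finset.range (m + 1)).erase j, A i) := by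
        rw [← map_mul]
        exact congrArg ι (Finset.mul_prod_erase _ _ hj).symm
      rw [h1, h2, map_mul, map_mul, hιdef, RatFunc.algebraMap_C, RatFunc.algebraMap_X,
        div_mul_eq_mul_div, mul_comm ((algebraMap ℂ[X] (RatFunc ℂ)) (A j)), ← mul_assoc,
        mul_div_assoc, div_self (hAne j), mul_one]
    have hSP : S * ι P = ι T := by
      rw [hSdef, hTdef, Finset.sum_mul, map_sum]
      exact Finset.sum_congr rfl hterm
    have h1 : ι pc = (ι p / ι q - S) * ι qc := (div_eq_iff hqcne).mp hg'
    have key : ι pc * ι q = ι p * ι qc - S * (ι q * ι qc) := by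
      rw [h1, sub_mul, sub_mul, mul_right_comm (ι p / ι q) (ι qc) (ι q), div_mul_cancel₀ _ hqne]
      ring
    apply hinj
    simp only [map_mul, map_sub, map_neg]
    linear_combination (ι P) * key - (ι q * ι qc) * hSP
  -- evaluated version
  have hEv : ∀ z : ℂ, P.eval z * (p.eval (z ^ d) * q.eval z - p.eval z * q.eval (z ^ d))
      = -(q.eval z * q.eval (z ^ d) * T.eval z) := by
    intro z
    have h := congrArg (eval z) hE
    simpa only [eval_mul, eval_sub, eval_neg, hpcdef, hqcdef, eval_comp, eval_pow, eval_X]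
      using h
  -- p does not vanish at roots of q
  have hpq : ∀ z : ℂ, q.eval z = 0 → p.eval z ≠ 0 := by
    obtain ⟨a, b, hab⟩ := hco
    intro z hz hp
    have := congrArg (eval z) hab
    simp [eval_add, eval_mul, hz, hp] at this
  -- value of P
  have hPval : ∀ z : ℂ, P.eval z = ∏ j ∈ Finset.range (m + 1), (1 - z ^ d ^ j) := by
    intro z
    rw [hPdef, eval_prod]
    exact Finset.prod_congr rfl fun j _ => by simp [hAdef]
  have hPne : ∀ z : ℂ, (∀ j, j ≤ m → z ^ d ^ j ≠ 1) → P.eval z ≠ 0 := by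
    intro z hz
    rw [hPval]
    apply Finset.prod_ne_zero_iff.mpr
    intro j hj
    have h2 := hz j (by have := Finset.mem_range.mp hj; omega)
    exact sub_ne_zero.mpr fun h => h2 h.symm
  -- upward step
  have hstep : ∀ β : ℂ, q.eval (β ^ d) = 0 → P.eval β ≠ 0 → q.eval β = 0 := by
    intro β h1 h2
    have h3 := hEv β
    rw [h1] at h3
    simp only [mul_zero, zero_mul, sub_zero, neg_zero] at h3
    rcases mul_eq_zero.mp h3 with h | h
    · exact absurd h h2
    rcases mul_eq_zero.mp h with h | h
    · exact absurd h (hpq _ h1)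
    · exact h
  -- downward step
  have hdown : ∀ α : ℂ, q.eval α = 0 → P.eval α ≠ 0 → q.eval (α ^ d) = 0 := by
    intro α h1 h2
    have h3 := hEv α
    rw [h1] at h3
    simp only [mul_zero, zero_mul, zero_sub, neg_zero, mul_neg, neg_eq_zero] at h3
    rcases mul_eq_zero.mp h3 with h | h
    · exact absurd h h2
    rcases mul_eq_zero.mp h with h | h
    · exact absurd h (hpq _ h1)
    · exact h
  have hfin : {x : ℂ | q.IsRoot x}.Finite := Polynomial.finite_setOf_isRoot hq0
  -- q(0) ≠ 0
  have hq00 : q.eval 0 ≠ 0 := by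
    intro h0
    have he : 1 ≤ rootMultiplicity 0 q := (rootMultiplicity_pos hq0).mpr h0
    set e := rootMultiplicity 0 q with hedef
    have h1 := pow_mul_divByMonic_rootMultiplicity_eq q 0
    rw [C_0, sub_zero, ← hedef] at h1
    have h2 := eval_divByMonic_pow_rootMultiplicity_ne_zero 0 hq0
    rw [C_0, sub_zero, ← hedef] at h2
    set q₀ : ℂ[X] := q /ₘ X ^ e with hq₀def
    have hqcfac : qc = X ^ (d * e) * q₀.comp (X ^ d) := by
      rw [hqcdef, ← h1, mul_comp, pow_comp, X_comp, ← pow_mul]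
    have h3e : 3 * e ≤ d * e := Nat.mul_le_mul_right e hd
    have hdee : e + (d * e - e) = d * e := by omega
    have hx : (X : ℂ[X]) ^ e * X ^ (d * e - e) = X ^ (d * e) := by
      rw [← pow_add, hdee]
    have hE' := hE
    rw [← h1, hqcfac] at hE'
    have hEE : X ^ e * (P * (pc * q₀ - p * (X ^ (d * e - e) * q₀.comp (X ^ d))))
        = X ^ e * (-(q₀ * (X ^ (d * e) * q₀.comp (X ^ d)) * T)) := by
      linear_combination hE' - P * p * q₀.comp (X ^ d) * hx
    have hF := mul_left_cancel₀ (pow_ne_zero e X_ne_zero) hEE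
    have h4 := congrArg (eval 0) hF
    simp only [eval_mul, eval_sub, eval_neg, eval_pow, eval_X, eval_comp, hpcdef] at h4
    rw [zero_pow (by omega : d * e - e ≠ 0), zero_pow (by omega : d * e ≠ 0), hPval] at h4
    have hP0 : ∏ j ∈ Finset.range (m + 1), ((1:ℂ) - 0 ^ d ^ j) = 1 :=
      Finset.prod_eq_one fun j _ => by rw [zero_pow (pow_ne_zero j hd0), sub_zero]
    rw [hP0] at h4
    simp only [mul_zero, zero_mul, sub_zero, neg_zero, one_mul] at h4
    rcases mul_eq_zero.mp h4 with h | h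
    · exact hpq 0 h0 (by rwa [zero_pow hd0] at h)
    · exact h2 h
  have hford : ∀ α : ℂ, q.eval α = 0 → IsOfFinOrder α := by
    intro α hα
    by_contra hnf
    have hα0 : α ≠ 0 := fun h => hq00 (by rwa [h] at hα)
    have hpow1 : ∀ n : ℕ, n ≠ 0 → α ^ n ≠ 1 := by
      intro n hn h1
      exact hnf (isOfFinOrder_iff_pow_eq_one.mpr ⟨n, Nat.pos_of_ne_zero hn, h1⟩)
    have hroots : ∀ i : ℕ, q.eval (α ^ d ^ i) = 0 := by
      intro i
      induction i with
      | zero => simpa using hα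
      | succ i ih =>
        have h2 : (α ^ d ^ i) ^ d = α ^ d ^ (i + 1) := by
          rw [← pow_mul, ← pow_succ]
        have h3 := hdown (α ^ d ^ i) ih (hPne _ ?_)
        · rwa [h2] at h3
        · intro j hj h1
          rw [← pow_mul] at h1
          exact hpow1 _ (by positivity) h1
    have hcancel : ∀ a b : ℕ, a < b → α ^ d ^ a = α ^ d ^ b → False := by
      intro a b hab h
      have hlt : d ^ a < d ^ b := Nat.pow_lt_pow_right hd1 hab
      have h2 : α ^ d ^ a * α ^ (d ^ b - d ^ a) = α ^ d ^ a * 1 := by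
        rw [mul_one, ← pow_add, Nat.add_sub_cancel' hlt.le]
        exact h.symm
      have h3 := mul_left_cancel₀ (pow_ne_zero _ hα0) h2
      exact hpow1 _ (by omega) h3
    have hinj2 : Function.Injective (fun i : ℕ => α ^ d ^ i) := by
      intro i j hij
      by_contra hne
      rcases Nat.lt_or_ge i j with hlt | hge
      · exact hcancel i j hlt hij
      · exact hcancel j i (by omega) hij.symm
    exact hfin.not_infinite
      (Set.infinite_of_injective_forall_mem hinj2 fun i => hroots i)
  -- all roots of q have order N with d*N ∣ d^m
  have hdvd : ∀ α : ℂ, q.eval α = 0 → d * orderOf α ∣ d ^ m := by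
    intro α hα
    by_contra hndvd
    set N := orderOf α with hNdef
    have hN : 0 < N := orderOf_pos_iff.mpr (hford α hα)
    have hchain : ∀ i : ℕ, ∃ β : ℂ, q.eval β = 0 ∧ orderOf β = d ^ i * N := by
      intro i
      induction i with
      | zero => exact ⟨α, hα, by rw [pow_zero, one_mul]⟩
      | succ i ih =>
        obtain ⟨β, hβroot, hβord⟩ := ih
        obtain ⟨γ, hγd, hγord⟩ := order_lift β (d ^ i * N) d (by positivity) (by omega) hβord
        refine ⟨γ, ?_, by rw [hγord]; ring⟩
        apply hstep γ (by rw [hγd]; exact hβroot)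
        apply hPne
        intro j hj h1
        have h2 := orderOf_dvd_of_pow_eq_one h1
        rw [hγord] at h2
        have h4 : d * N ∣ d * (d ^ i * N) := ⟨d ^ i, by ring⟩
        exact hndvd (h4.trans (h2.trans (pow_dvd_pow d (by omega))))
    choose f hf using hchain
    have hinj2 : Function.Injective f := by
      intro i j hij
      have h5 := congrArg orderOf hij
      rw [(hf i).2, (hf j).2] at h5
      have h6 := Nat.eq_of_mul_eq_mul_right hN h5
      exact Nat.pow_right_injective (by omega) h6
    exact hfin.not_infinite
      (Set.infinite_of_injective_forall_mem hinj2 fun i => (hf i).1)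
  -- hence: no root of q is "primitive-ish of level m"
  have hnoroot : ∀ ζ : ℂ, ζ ^ d ^ m = 1 → (∀ j, j < m → ζ ^ d ^ j ≠ 1) → q.eval ζ ≠ 0 := by
    intro ζ h1 h2 hroot
    have hdq := hdvd ζ hroot
    have hζfin : IsOfFinOrder ζ := isOfFinOrder_iff_pow_eq_one.mpr ⟨d ^ m, by positivity, h1⟩
    have hζpos : 0 < orderOf ζ := orderOf_pos_iff.mpr hζfin
    rcases Nat.eq_zero_or_pos m with hm | hm
    · subst hm
      rw [pow_zero] at hdq
      have h5 := Nat.le_of_dvd one_pos hdq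
      have h6 := Nat.le_mul_of_pos_right d hζpos
      omega
    · have hm1 : d ^ m = d * d ^ (m - 1) := by
        rw [← pow_succ']
        congr 1
        omega
      rw [hm1] at hdq
      have h3 : orderOf ζ ∣ d ^ (m - 1) :=
        (mul_dvd_mul_iff_left (by omega : (d : ℕ) ≠ 0)).mp hdq
      exact h2 (m - 1) (by omega) (orderOf_dvd_iff_pow_eq_one.mp h3)
  -- the primitive d^m-th root of unity
  obtain ⟨ξ, hξ⟩ : ∃ ξ : ℂ, IsPrimitiveRoot ξ (d ^ m) :=
    ⟨_, Complex.isPrimitiveRoot_exp _ (pow_ne_zero m hd0)⟩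
  have hξ1 : ξ ^ d ^ m = 1 := hξ.pow_eq_one
  have hξj : ∀ j, j < m → ξ ^ d ^ j ≠ 1 := by
    intro j hj h1
    have := hξ.dvd_of_pow_eq_one _ h1
    have := (Nat.pow_dvd_pow_iff_le_right hd1).mp this
    omega
  have hξ0 : ξ ≠ 0 := by
    intro h
    have := hξ1
    rw [h, zero_pow (pow_ne_zero m hd0)] at this
    exact zero_ne_one this
  have hqξ : q.eval ξ ≠ 0 := hnoroot ξ hξ1 hξj
  -- value of T at level-m points
  have hTval : ∀ ζ : ℂ, ζ ^ d ^ m = 1 →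
      T.eval ζ = c m * ζ * ∏ i ∈ Finset.range m, (1 - ζ ^ d ^ i) := by
    intro ζ hζ1
    rw [hTdef, eval_finset_sum]
    rw [Finset.sum_eq_single m]
    · rw [eval_mul, eval_mul, eval_C, eval_X, eval_prod]
      congr 1
      rw [show (Finset.range (m + 1)).erase m = Finset.range m by
        rw [Finset.range_add_one, Finset.erase_insert Finset.notMem_range_self]]
      exact Finset.prod_congr rfl fun i _ => by simp [hAdef]
    · intro j hj hjm
      rw [eval_mul, eval_prod]
      have hmem : m ∈ (Finset.range (m + 1)).erase j :=
        Finset.mem_erase.mpr ⟨fun h => hjm h.symm, Finset.self_mem_range_succ m⟩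
      rw [Finset.prod_eq_zero hmem (by simp [hAdef, hζ1]), mul_zero]
    · intro h
      exact absurd (Finset.self_mem_range_succ m) h
  have hTne : ∀ ζ : ℂ, ζ ^ d ^ m = 1 → (∀ j, j < m → ζ ^ d ^ j ≠ 1) → ζ ≠ 0 →
      T.eval ζ ≠ 0 := by
    intro ζ h1 h2 h3
    rw [hTval ζ h1]
    refine mul_ne_zero (mul_ne_zero hcm h3) (Finset.prod_ne_zero_iff.mpr fun i hi => ?_)
    exact sub_ne_zero.mpr fun h => (h2 i (Finset.mem_range.mp hi)) h.symm
  -- Step D : q (ξ^d) = 0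
  have hη : q.eval (ξ ^ d) = 0 := by
    have h3 := hEv ξ
    have hP0 : P.eval ξ = 0 := by
      rw [hPval]
      exact Finset.prod_eq_zero (Finset.self_mem_range_succ m) (by rw [hξ1, sub_self])
    rw [hP0, zero_mul] at h3
    have h4 := h3.symm
    rw [neg_eq_zero] at h4
    rcases mul_eq_zero.mp h4 with h | h
    · rcases mul_eq_zero.mp h with h | h
      · exact absurd h hqξ
      · exact h
    · exact absurd h (hTne ξ hξ1 hξj hξ0)
  -- m = 0 : immediate contradiction
  rcases Nat.eq_zero_or_pos m with hm0 | hm1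
  · subst hm0
    have hξeq : ξ = 1 := by
      have h1 := hξ1
      rwa [pow_zero, pow_one] at h1
    rw [hξeq, one_pow] at hη
    rw [hξeq] at hqξ
    exact hqξ hη
  -- now m ≥ 1
  set η : ℂ := ξ ^ d with hηdef
  set k : ℕ := rootMultiplicity η q with hkdef
  have hk1 : 1 ≤ k := (rootMultiplicity_pos hq0).mpr hη
  set q₁ : ℂ[X] := q /ₘ (X - C η) ^ k with hq₁def
  have hq₁ : (X - C η) ^ k * q₁ = q := pow_mul_divByMonic_rootMultiplicity_eq q η
  have hq₁η : q₁.eval η ≠ 0 := eval_divByMonic_pow_rootMultiplicity_ne_zero η hq0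
  -- the raw identity at suitable points ζ
  have hraw : ∀ ζ : ℂ, ζ ^ d = η → ζ ^ d ^ m = 1 →
      (∏ i ∈ Finset.range m, (1 - ζ ^ d ^ i)) * ((d : ℂ) ^ m * ζ ^ (d ^ m - 1)) *
        (p.eval η * q.eval ζ)
      = q.eval ζ * (0 : ℂ) ^ (k - 1) * ((d : ℂ) * ζ ^ (d - 1)) ^ k * q₁.eval η
          * T.eval ζ := by
    intro ζ hζd hζ1
    obtain ⟨u, hu, huv⟩ := geom_cofactor ζ d
    obtain ⟨v, hv, hvv⟩ := geom_cofactor ζ (d ^ m)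
    rw [hζd] at hu
    rw [hζ1, map_one] at hv
    have hqcfac : qc = ((X - C ζ) * u) ^ k * q₁.comp (X ^ d) := by
      rw [hqcdef, ← hq₁, mul_comp, pow_comp, sub_comp, X_comp, C_comp, hu]
    have hPfac : P = (∏ i ∈ Finset.range m, A i) * (-((X - C ζ) * v)) := by
      rw [hPdef, Finset.prod_range_succ]
      congr 1
      rw [hAdef]
      simp only []
      rw [← hv]
      ring
    have hpk : (X - C ζ) ^ k = (X - C ζ) ^ (k - 1) * (X - C ζ) := by
      conv_lhs => rw [show k = (k - 1) + 1 by omega]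
      rw [pow_succ]
    have hE2 : (X - C ζ) * (-((∏ i ∈ Finset.range m, A i) * v * (pc * q - p * qc)))
        = (X - C ζ) * (-(q * ((X - C ζ) ^ (k - 1) * u ^ k * q₁.comp (X ^ d)) * T)) := by
      calc (X - C ζ) * (-((∏ i ∈ Finset.range m, A i) * v * (pc * q - p * qc)))
          = P * (pc * q - p * qc) := by rw [hPfac]; ring
        _ = -(q * qc * T) := hE
        _ = (X - C ζ) * (-(q * ((X - C ζ) ^ (k - 1) * u ^ k * q₁.comp (X ^ d)) * T)) := by
            rw [hqcfac, mul_pow, hpk]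
            ring
    have hE3 := mul_left_cancel₀ (Polynomial.X_sub_C_ne_zero ζ) hE2
    have hE4 := neg_inj.mp hE3
    have h4 := congrArg (eval ζ) hE4
    simp only [eval_mul, eval_sub, eval_neg, eval_pow, eval_X, eval_C, eval_comp,
      eval_prod, eval_one, hpcdef, hqcdef, sub_self, hAdef] at h4
    rw [hζd] at h4
    rw [hη] at h4
    rw [huv, hvv] at h4
    push_cast at h4
    linear_combination h4
  -- k = 1
  have hdC : (d : ℂ) ≠ 0 := Nat.cast_ne_zero.mpr hd0
  have hPmξne : ∀ ζ : ℂ, (∀ j, j < m → ζ ^ d ^ j ≠ 1) →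
      (∏ i ∈ Finset.range m, (1 - ζ ^ d ^ i)) ≠ 0 := by
    intro ζ h2
    exact Finset.prod_ne_zero_iff.mpr fun i hi =>
      sub_ne_zero.mpr fun h => (h2 i (Finset.mem_range.mp hi)) h.symm
  have hpη : p.eval η ≠ 0 := hpq η hη
  have hkone : k = 1 := by
    by_contra hk
    have h := hraw ξ hηdef.symm hξ1
    rw [zero_pow (by omega : k - 1 ≠ 0)] at h
    simp only [mul_zero, zero_mul] at h
    exact (mul_ne_zero (mul_ne_zero (hPmξne ξ hξj)
      (mul_ne_zero (pow_ne_zero m hdC) (pow_ne_zero _ hξ0)))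
      (mul_ne_zero hpη hqξ)) h
  have hstar : ∀ ζ : ℂ, ζ ^ d = η → ζ ^ d ^ m = 1 → (∀ j, j < m → ζ ^ d ^ j ≠ 1) →
      q.eval ζ ≠ 0 → (d : ℂ) ^ m * p.eval η = (d : ℂ) * ζ ^ (d + 1) * q₁.eval η * c m := by
    intro ζ h1 h2 h3 h4
    have hζ0 : ζ ≠ 0 := by
      intro h0
      rw [h0, zero_pow (pow_ne_zero m hd0)] at h2
      exact zero_ne_one h2
    have h := hraw ζ h1 h2
    rw [hkone] at h
    simp only [pow_one, Nat.sub_self, pow_zero, one_mul, mul_one] at h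
    rw [hTval ζ h2] at h
    have hdm1 : 0 < d ^ m := pow_pos (by omega) m
    have e1 : ζ ^ (d ^ m - 1) * ζ = 1 := by
      rw [← pow_succ, show d ^ m - 1 + 1 = d ^ m by omega]
      exact h2
    have e2 : ζ ^ (d - 1) * ζ ^ 2 = ζ ^ (d + 1) := by
      rw [← pow_add]
      congr 1
      omega
    apply mul_right_cancel₀ (mul_ne_zero h4 (hPmξne ζ h3))
    linear_combination ζ * h
      - ((∏ i ∈ Finset.range m, (1 - ζ ^ d ^ i)) * (d:ℂ) ^ m * p.eval η * q.eval ζ) * e1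
      + (q.eval ζ * (d:ℂ) * q₁.eval η * c m * (∏ i ∈ Finset.range m, (1 - ζ ^ d ^ i))) * e2
  -- apply at ξ and ξ' := ξ ^ (1 + d ^ (m - 1))
  have hsξ := hstar ξ hηdef.symm hξ1 hξj hqξ
  set ξ' : ℂ := ξ ^ (1 + d ^ (m - 1)) with hξ'def
  have hmm1 : d ^ (m - 1) * d = d ^ m := by
    rw [← pow_succ]
    congr 1
    omega
  have hξ'd : ξ' ^ d = η := by
    rw [hξ'def, ← pow_mul, show (1 + d ^ (m - 1)) * d = d + d ^ m from by
      rw [add_mul, one_mul, hmm1], pow_add, hξ1, mul_one, hηdef]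
  have hξ'1 : ξ' ^ d ^ m = 1 := by
    rw [hξ'def, ← pow_mul, mul_comm, pow_mul, hξ1, one_pow]
  have hξ'j : ∀ j, j < m → ξ' ^ d ^ j ≠ 1 := by
    intro j hj h1
    rw [hξ'def, ← pow_mul] at h1
    have h2 := hξ.dvd_of_pow_eq_one _ h1
    have hjm : d ^ j * d ^ (m - j) = d ^ m := by
      rw [← pow_add]
      congr 1
      omega
    have h3 : d ^ (m - j) ∣ 1 + d ^ (m - 1) := by
      rcases h2 with ⟨t, ht⟩
      refine ⟨t, ?_⟩
      rw [← hjm] at ht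
      have hdj : 0 < d ^ j := pow_pos (by omega) j
      have ht2 : d ^ j * (1 + d ^ (m - 1)) = d ^ j * (d ^ (m - j) * t) := by
        rw [mul_comm (d ^ j) (1 + d ^ (m - 1)), ht]
        ring
      exact Nat.eq_of_mul_eq_mul_left hdj ht2
    have h5 : d ∣ 1 + d ^ (m - 1) := by
      simpa using (pow_dvd_pow d (by omega : 1 ≤ m - j)).trans h3
    rcases Nat.lt_or_ge m 2 with hm2 | hm2
    · have hm1' : m = 1 := by omega
      rw [hm1'] at h5
      simp only [Nat.sub_self, pow_zero] at h5
      have := Nat.le_of_dvd (by omega) h5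
      omega
    · have h6 : d ∣ d ^ (m - 1) := dvd_pow_self d (by omega)
      have h7 : d ∣ 1 := (Nat.dvd_add_right h6).mp (by rwa [add_comm] at h5)
      have := Nat.le_of_dvd one_pos h7
      omega
  have hqξ' : q.eval ξ' ≠ 0 := hnoroot ξ' hξ'1 hξ'j
  have hsξ' := hstar ξ' hξ'd hξ'1 hξ'j hqξ'
  have heq2 : (d:ℂ) * ξ ^ (d+1) * q₁.eval η * c m = (d:ℂ) * ξ' ^ (d+1) * q₁.eval η * c m := by
    rw [← hsξ, hsξ']
  have h5 : ξ ^ (d+1) = ξ' ^ (d+1) := by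
    have h6 := mul_right_cancel₀ hcm heq2
    have h7 := mul_right_cancel₀ hq₁η h6
    exact mul_left_cancel₀ hdC h7
  have h7 : ξ' ^ (d+1) = ξ ^ (d+1) * ξ ^ (d ^ (m-1) * (d+1)) := by
    rw [hξ'def, ← pow_mul, ← pow_add]
    congr 1
    ring
  have h8 : ξ ^ (d ^ (m-1) * (d+1)) = 1 := by
    have h9 : ξ ^ (d+1) * ξ ^ (d ^ (m-1) * (d+1)) = ξ ^ (d+1) * 1 := by
      rw [mul_one, ← h7, ← h5]
    exact mul_left_cancel₀ (pow_ne_zero (d+1) hξ0) h9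
  have h9 := hξ.dvd_of_pow_eq_one _ h8
  have h10 : d ^ (m-1) * d ∣ d ^ (m-1) * (d+1) := by
    rw [hmm1]
    exact h9
  have h11 : d ∣ d + 1 :=
    (mul_dvd_mul_iff_left (pow_ne_zero (m-1) (by omega : (d:ℕ) ≠ 0))).mp h10
  have h12 : d ∣ 1 := (Nat.dvd_add_right (dvd_refl d)).mp h11
  have := Nat.le_of_dvd one_pos h12
  omega

/-- For `d ≥ 3` and complex numbers `c_0, …, c_m` not all zero, no rational
function `g ∈ ℂ(z)` satisfies `g(z^d) = g(z) − Σ_{j=0}^m c_j·z/(1 − z^(d^j))`.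
Here `g(z^d)` is expressed as the evaluation of `g` at `X^d` in `ℂ(X)`
(note that the denominator of `g` never evaluates to `0` at `X^d`, so this
evaluation is the honest substitution). -/
theorem no_ratFunc_solution_Gdj_inhomog
    (d : ℕ) (hd : 3 ≤ d) (m : ℕ) (c : ℕ → ℂ) (hc : ∃ j ≤ m, c j ≠ 0) :
    ¬ ∃ g : RatFunc ℂ,
        RatFunc.eval RatFunc.C (RatFunc.X ^ d) g =
          g - ∑ j ∈ Finset.range (m + 1),
            RatFunc.C (c j) * RatFunc.X / (1 - RatFunc.X ^ (d ^ j)) := by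
  classical
  obtain ⟨j₀, hj₀m, hj₀⟩ := hc
  set M := Nat.findGreatest (fun j => c j ≠ 0) m with hMdef
  have hM : c M ≠ 0 := Nat.findGreatest_spec (P := fun j => c j ≠ 0) hj₀m hj₀
  have hMle : M ≤ m := Nat.findGreatest_le m
  rintro ⟨g, hg⟩
  apply main_lemma d hd M c hM
  refine ⟨g, ?_⟩
  rw [hg]
  congr 1
  rw [Finset.range_eq_Ico,
    ← Finset.sum_Ico_consecutive _ (Nat.zero_le (M + 1)) (by omega : M + 1 ≤ m + 1)]
  have hzero : ∑ j ∈ Finset.Ico (M + 1) (m + 1),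
      RatFunc.C (c j) * RatFunc.X / (1 - RatFunc.X ^ (d ^ j)) = 0 := by
    refine Finset.sum_eq_zero fun j hj => ?_
    obtain ⟨h1, h2⟩ := Finset.mem_Ico.mp hj
    have h3 : ¬ (c j ≠ 0) := Nat.findGreatest_is_greatest (P := fun j => c j ≠ 0) (n := m) (by omega) (by omega)
    rw [not_not] at h3
    simp [h3]
  rw [hzero, add_zero, Finset.range_eq_Ico]
end

section
/- Let m ≥ 0 and let c_j ∈ ℂ for j ∈ {0, 2, 3, …, m} be not all zero. Then there is no rational function g ∈ ℂ(z) satisfying g(z^2) = g(z) − Σ_{j∈{0,2,…,m}} c_j·z/(1 − z^{2^j}). -/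
open Polynomial
noncomputable section
namespace NRS
abbrev K := RatFunc ℂ


def sqHom : ℂ[X] →+* K :=
  (algebraMap ℂ[X] K).comp ((Polynomial.aeval (Polynomial.X ^ 2 : ℂ[X])).toRingHom)

lemma sqHom_apply (p : ℂ[X]) : sqHom p = algebraMap ℂ[X] K (p.comp (X ^ 2)) := by
  simp [sqHom, Polynomial.aeval_def, Polynomial.comp]

lemma comp_X_pow_injective : Function.Injective (fun p : ℂ[X] => p.comp (X ^ 2)) := by
  intro p q h
  have := Polynomial.expand_injective (R := ℂ) (n := 2) two_pos
  apply this
  rwa [Polynomial.expand_eq_comp_X_pow, Polynomial.expand_eq_comp_X_pow]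

lemma sqHom_injective : Function.Injective sqHom := by
  intro p q h
  rw [sqHom_apply, sqHom_apply] at h
  exact comp_X_pow_injective (RatFunc.algebraMap_injective ℂ h)

def Phi : K →+* K := IsFractionRing.lift sqHom_injective

lemma Phi_poly (p : ℂ[X]) :
    Phi (algebraMap ℂ[X] K p) = algebraMap ℂ[X] K (p.comp (X ^ 2)) := by
  rw [Phi, IsFractionRing.lift_algebraMap, sqHom_apply]



/-- `f` is analytic at `a` with value `v`. -/
def AnalV (a : ℂ) (f : K) (v : ℂ) : Prop :=
  ∃ p q : ℂ[X], q.eval a ≠ 0 ∧ f = algebraMap ℂ[X] K p / algebraMap ℂ[X] K q ∧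
    p.eval a / q.eval a = v

def Anal (a : ℂ) (f : K) : Prop := ∃ v, AnalV a f v

lemma cross {p q p' q' : ℂ[X]} (hq : q ≠ 0) (hq' : q' ≠ 0)
    (h : algebraMap ℂ[X] K p / algebraMap ℂ[X] K q
       = algebraMap ℂ[X] K p' / algebraMap ℂ[X] K q') : p * q' = p' * q := by
  apply RatFunc.algebraMap_injective ℂ
  rw [map_mul, map_mul]
  have h1 : (algebraMap ℂ[X] K q) ≠ 0 := RatFunc.algebraMap_ne_zero hq
  have h2 : (algebraMap ℂ[X] K q') ≠ 0 := RatFunc.algebraMap_ne_zero hq'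
  field_simp at h
  linear_combination h

lemma AnalV.unique {a : ℂ} {f : K} {v w : ℂ} (hv : AnalV a f v) (hw : AnalV a f w) :
    v = w := by
  obtain ⟨p, q, hq, rfl, hv⟩ := hv
  obtain ⟨p', q', hq', he, hw⟩ := hw
  have hq0 : q ≠ 0 := fun h => hq (by simp [h])
  have hq0' : q' ≠ 0 := fun h => hq' (by simp [h])
  have := cross hq0 hq0' he
  have := congrArg (Polynomial.eval a) this
  simp only [Polynomial.eval_mul] at this
  rw [← hv, ← hw]
  field_simp
  linear_combination this

lemma AnalV.add {a : ℂ} {f g : K} {v w : ℂ} (hf : AnalV a f v) (hg : AnalV a g w) :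
    AnalV a (f + g) (v + w) := by
  obtain ⟨p, q, hq, rfl, hv⟩ := hf
  obtain ⟨p', q', hq', rfl, hw⟩ := hg
  refine ⟨p * q' + p' * q, q * q', by simp [hq, hq'], ?_, ?_⟩
  · have h1 : (algebraMap ℂ[X] K q) ≠ 0 := RatFunc.algebraMap_ne_zero (fun h => hq (by simp [h]))
    have h2 : (algebraMap ℂ[X] K q') ≠ 0 := RatFunc.algebraMap_ne_zero (fun h => hq' (by simp [h]))
    rw [map_add, map_mul, map_mul, map_mul]
    field_simp
  · simp only [Polynomial.eval_add, Polynomial.eval_mul]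
    rw [← hv, ← hw]
    field_simp

lemma AnalV.mul {a : ℂ} {f g : K} {v w : ℂ} (hf : AnalV a f v) (hg : AnalV a g w) :
    AnalV a (f * g) (v * w) := by
  obtain ⟨p, q, hq, rfl, hv⟩ := hf
  obtain ⟨p', q', hq', rfl, hw⟩ := hg
  refine ⟨p * p', q * q', by simp [hq, hq'], ?_, ?_⟩
  · rw [map_mul, map_mul]
    field_simp
  · simp only [Polynomial.eval_mul]
    rw [← hv, ← hw]
    field_simp

lemma AnalV.poly (a : ℂ) (p : ℂ[X]) : AnalV a (algebraMap ℂ[X] K p) (p.eval a) :=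
  ⟨p, 1, by simp, by simp, by simp⟩

lemma AnalV.sub {a : ℂ} {f g : K} {v w : ℂ} (hf : AnalV a f v) (hg : AnalV a g w) :
    AnalV a (f - g) (v - w) := by
  have := hf.add ((AnalV.poly a (-1)).mul hg)
  simpa [sub_eq_add_neg] using this

lemma AnalV.sum {a : ℂ} {s : Finset ℕ} {F : ℕ → K} {V : ℕ → ℂ}
    (h : ∀ j ∈ s, AnalV a (F j) (V j)) :
    AnalV a (∑ j ∈ s, F j) (∑ j ∈ s, V j) := by
  classical
  induction s using Finset.cons_induction with
  | empty => simpa using AnalV.poly a 0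
  | cons i s hi ih =>
    rw [Finset.sum_cons, Finset.sum_cons]
    exact (h i (Finset.mem_cons_self i s)).add (ih fun j hj => h j (Finset.mem_cons.2 (Or.inr hj)))


lemma AnalV.phi {x : ℂ} {f : K} {v : ℂ} (h : AnalV (x ^ 2) f v) :
    AnalV x (Phi f) v := by
  obtain ⟨p, q, hq, rfl, hv⟩ := h
  have hq0 : q ≠ 0 := fun h => hq (by simp [h])
  refine ⟨p.comp (X ^ 2), q.comp (X ^ 2), ?_, ?_, ?_⟩
  · rwa [Polynomial.eval_comp, Polynomial.eval_pow, Polynomial.eval_X]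
  · rw [map_div₀, Phi_poly, Phi_poly]
  · rwa [Polynomial.eval_comp, Polynomial.eval_comp, Polynomial.eval_pow, Polynomial.eval_X]

lemma coprime_no_common_root {p q : ℂ[X]} (h : IsCoprime p q) {a : ℂ}
    (hp : p.eval a = 0) (hq : q.eval a = 0) : False := by
  obtain ⟨u, v, huv⟩ := h
  have := congrArg (Polynomial.eval a) huv
  simp [hp, hq] at this

lemma Anal.of_phi {x : ℂ} {f : K} (h : Anal x (Phi f)) : Anal (x ^ 2) f := by
  obtain ⟨v, P, Q, hQ, hPQ, -⟩ := h
  have hB : (f.denom.comp (X ^ 2)).eval x = f.denom.eval (x ^ 2) := by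
    rw [Polynomial.eval_comp, Polynomial.eval_pow, Polynomial.eval_X]
  by_cases hd : f.denom.eval (x ^ 2) = 0
  · exfalso
    have hfe : Phi f = algebraMap ℂ[X] K (f.num.comp (X ^ 2))
        / algebraMap ℂ[X] K (f.denom.comp (X ^ 2)) := by
      conv_lhs => rw [← RatFunc.num_div_denom f]
      rw [map_div₀, Phi_poly, Phi_poly]
    have hQ0 : Q ≠ 0 := fun h => hQ (by simp [h])
    have hden0 : f.denom.comp (X ^ 2) ≠ 0 := fun h => by
      have := RatFunc.denom_ne_zero f
      exact this (comp_X_pow_injective (by simpa using h))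
    have hcr := cross hden0 hQ0 (hfe.symm.trans hPQ)
    have := congrArg (Polynomial.eval x) hcr
    simp only [Polynomial.eval_mul] at this
    rw [Polynomial.eval_comp, Polynomial.eval_pow, Polynomial.eval_X] at this
    -- this : f.num.eval (x^2) * Q.eval x = P.eval x * (f.denom.comp (X^2)).eval x
    rw [hB, hd, mul_zero] at this
    have hnum : f.num.eval (x ^ 2) = 0 := by
      rcases mul_eq_zero.1 this with h | h
      · exact h
      · exact absurd h hQ
    exact coprime_no_common_root (RatFunc.isCoprime_num_denom f) hnum hd
  · exact ⟨_, f.num, f.denom, hd, (RatFunc.num_div_denom f).symm, rfl⟩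

lemma eval_eq_Phi (g : K) :
    RatFunc.eval RatFunc.C (RatFunc.X ^ 2) g = Phi g := by
  have key : ∀ p : ℂ[X], Polynomial.eval₂ RatFunc.C (RatFunc.X ^ 2) p
      = algebraMap ℂ[X] K (p.comp (X ^ 2)) := by
    intro p
    have := Polynomial.hom_eval₂ p Polynomial.C (algebraMap ℂ[X] K) (X ^ 2)
    rw [show Polynomial.eval₂ Polynomial.C (X ^ 2) p = p.comp (X ^ 2) from rfl] at this
    have h1 : (algebraMap ℂ[X] K).comp Polynomial.C = RatFunc.C := by
      ext z
      simp [RatFunc.algebraMap_C]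
    have h2 : (algebraMap ℂ[X] K) (X ^ 2) = RatFunc.X ^ 2 := by
      simp [RatFunc.algebraMap_X]
    rw [h1, h2] at this
    exact this.symm
  rw [RatFunc.eval, key, key]
  conv_rhs => rw [← RatFunc.num_div_denom g, map_div₀, Phi_poly, Phi_poly]

lemma term_eq (d : ℂ) (n : ℕ) :
    RatFunc.C d * RatFunc.X / (1 - RatFunc.X ^ n)
      = algebraMap ℂ[X] K (Polynomial.C d * X) / algebraMap ℂ[X] K (1 - X ^ n) := by
  rw [map_mul, map_sub, map_pow, map_one, RatFunc.algebraMap_C, RatFunc.algebraMap_X]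

lemma term_analV (d : ℂ) (n : ℕ) (x : ℂ) (hx : x ^ 2 ^ n ≠ 1 ∨ d = 0) :
    AnalV x (RatFunc.C d * RatFunc.X / (1 - RatFunc.X ^ 2 ^ n)) (d * x / (1 - x ^ 2 ^ n)) := by
  rcases hx with hx | hd
  · refine ⟨Polynomial.C d * X, 1 - X ^ 2 ^ n, ?_, term_eq d (2 ^ n), by simp⟩
    simpa [sub_eq_zero] using fun h => hx h.symm
  · subst hd
    refine ⟨0, 1, by simp, by simp, by simp⟩

lemma pole_term_analV (d : ℂ) (n : ℕ) (x : ℂ) (hx : x ^ 2 ^ n = 1) :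
    AnalV x (algebraMap ℂ[X] K (X - Polynomial.C x)
        * (RatFunc.C d * RatFunc.X / (1 - RatFunc.X ^ 2 ^ n)))
      (-(d * x ^ 2) / 2 ^ n) := by
  have hx0 : x ≠ 0 := by
    intro h
    rw [h, zero_pow (pow_ne_zero n two_ne_zero)] at hx
    exact zero_ne_one hx
  set P : ℂ[X] := X ^ 2 ^ n - 1 with hP
  have hroot : P.IsRoot x := by simp [hP, Polynomial.IsRoot, hx]
  obtain ⟨D, hD⟩ := (Polynomial.dvd_iff_isRoot.2 hroot : (X - Polynomial.C x) ∣ P)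
  have hxpow : x ^ (2 ^ n - 1) * x = 1 := by
    rw [← pow_succ, Nat.sub_add_cancel Nat.one_le_two_pow, hx]
  have hDeval : D.eval x = 2 ^ n * x ^ (2 ^ n - 1) := by
    have h1 : Polynomial.derivative P = Polynomial.C ((2 : ℂ) ^ n) * X ^ (2 ^ n - 1) := by
      rw [hP, Polynomial.derivative_sub, Polynomial.derivative_one,
        Polynomial.derivative_X_pow]
      push_cast
      ring
    have h2 : Polynomial.derivative P
        = D + (X - Polynomial.C x) * Polynomial.derivative D := by
      rw [hD, Polynomial.derivative_mul, Polynomial.derivative_sub,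
        Polynomial.derivative_X, Polynomial.derivative_C]
      ring
    have h3 := h1.symm.trans h2
    have h4 := congrArg (Polynomial.eval x) h3
    simp only [Polynomial.eval_add, Polynomial.eval_mul, Polynomial.eval_sub,
      Polynomial.eval_C, Polynomial.eval_X, Polynomial.eval_pow] at h4
    linear_combination -h4
  have hDne : D.eval x ≠ 0 := by
    rw [hDeval]
    refine mul_ne_zero (pow_ne_zero n two_ne_zero) (fun h => ?_)
    rw [h, zero_mul] at hxpow
    exact zero_ne_one hxpow
  have hD0 : D ≠ 0 := fun h => hDne (by simp [h])
  have h1 : algebraMap ℂ[X] K (X - Polynomial.C x) ≠ 0 :=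
    RatFunc.algebraMap_ne_zero (Polynomial.X_sub_C_ne_zero x)
  refine ⟨-(Polynomial.C d * X), D, hDne, ?_, ?_⟩
  · rw [term_eq]
    have e1 : (1 - X ^ 2 ^ n : ℂ[X]) = -((X - Polynomial.C x) * D) := by
      rw [← hD, hP]; ring
    rw [e1]
    rw [show (algebraMap ℂ[X] K) (-((X - Polynomial.C x) * D))
        = -((algebraMap ℂ[X] K) (X - Polynomial.C x) * (algebraMap ℂ[X] K) D) by
      rw [map_neg, map_mul]]
    have h2 : algebraMap ℂ[X] K D ≠ 0 := RatFunc.algebraMap_ne_zero hD0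
    have hM : -((algebraMap ℂ[X] K) (X - Polynomial.C x) * (algebraMap ℂ[X] K) D) ≠ 0 :=
      neg_ne_zero.2 (mul_ne_zero h1 h2)
    rw [map_neg, ← mul_div_assoc, div_eq_div_iff hM h2]
    ring
  · simp only [Polynomial.eval_neg, Polynomial.eval_mul, Polynomial.eval_C,
      Polynomial.eval_X, hDeval]
    have hB : (2 : ℂ) ^ n ≠ 0 := pow_ne_zero _ two_ne_zero
    have hA : (2 : ℂ) ^ n * x ^ (2 ^ n - 1) ≠ 0 := by
      refine mul_ne_zero hB (fun h => ?_)
      rw [h, zero_mul] at hxpow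
      exact zero_ne_one hxpow
    rw [div_eq_div_iff hA hB]
    linear_combination d * x * 2 ^ n * hxpow

def Sfun (m : ℕ) (c : ℕ → ℂ) : K :=
  ∑ j ∈ (Finset.range (m + 1)).erase 1,
    RatFunc.C (c j) * RatFunc.X / (1 - RatFunc.X ^ (2 ^ j))

lemma S_anal (m : ℕ) (c : ℕ → ℂ) (x : ℂ)
    (h : ∀ j ∈ (Finset.range (m + 1)).erase 1, c j ≠ 0 → x ^ 2 ^ j ≠ 1) :
    Anal x (Sfun m c) := by
  refine ⟨∑ j ∈ (Finset.range (m + 1)).erase 1, c j * x / (1 - x ^ 2 ^ j), ?_⟩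
  exact AnalV.sum fun j hj => term_analV (c j) j x
    (by by_cases hcj : c j = 0; exacts [Or.inr hcj, Or.inl (h j hj hcj)])

/-- x has exact 2-power order 2^d -/
def Prim (d : ℕ) (a : ℂ) : Prop := a ^ 2 ^ d = 1 ∧ ∀ i < d, a ^ 2 ^ i ≠ 1

def sqrtc (z : ℂ) : ℂ := Classical.choose (IsAlgClosed.exists_pow_nat_eq z two_pos)

lemma sqrtc_sq (z : ℂ) : (sqrtc z) ^ 2 = z :=
  Classical.choose_spec (IsAlgClosed.exists_pow_nat_eq z two_pos)

def chain (a : ℂ) : ℕ → ℂ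
  | 0 => a
  | k + 1 => sqrtc (chain a k)

lemma chain_sq (a : ℂ) (k : ℕ) : (chain a (k + 1)) ^ 2 = chain a k := sqrtc_sq _

lemma sq_pow (z : ℂ) (e : ℕ) : z ^ 2 ^ (e + 1) = (z ^ 2) ^ 2 ^ e := by
  rw [pow_succ, mul_comm, pow_mul]

lemma prim_chain {d : ℕ} {a : ℂ} (hd : 1 ≤ d) (hp : Prim d a) (k : ℕ) :
    Prim (d + k) (chain a k) := by
  induction k with
  | zero => exact hp
  | succ k ih =>
    obtain ⟨h1, h2⟩ := ih
    constructor
    · rw [show d + (k + 1) = (d + k) + 1 from rfl, sq_pow, chain_sq, h1]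
    · intro i hi
      match i with
      | 0 =>
        simp only [pow_zero, pow_one]
        intro h
        have : chain a k = 1 := by rw [← chain_sq a k, h, one_pow]
        exact h2 0 (by omega) (by simpa using this)
      | i + 1 =>
        rw [sq_pow, chain_sq]
        exact h2 i (by omega)

lemma chain_inj {d : ℕ} {a : ℂ} (hd : 1 ≤ d) (hp : Prim d a) :
    Function.Injective (chain a) := by
  have key : ∀ k l, k < l → chain a k ≠ chain a l := by
    intro k l hkl he
    have h1 := (prim_chain hd hp k).1
    have h2 := (prim_chain hd hp l).2 (d + k) (by omega)
    rw [← he] at h2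
    exact h2 h1
  intro k l he
  rcases lt_trichotomy k l with h | h | h
  · exact absurd he (key k l h)
  · exact h
  · exact absurd he.symm (key l k h)

lemma AnalV.congr {a : ℂ} {f : K} {v w : ℂ} (h : AnalV a f v) (e : v = w) :
    AnalV a f w := e ▸ h

lemma descent (m : ℕ) (c : ℕ → ℂ) {g : K} (hg : Phi g = g - Sfun m c) {x : ℂ}
    (h1 : Anal x g) (h2 : Anal x (Sfun m c)) : Anal (x ^ 2) g := by
  obtain ⟨v, hv⟩ := h1
  obtain ⟨w, hw⟩ := h2
  exact Anal.of_phi ⟨v - w, by rw [hg]; exact hv.sub hw⟩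

lemma exists_base (g : K) {d : ℕ} {a : ℂ} (hd : 1 ≤ d) (hp : Prim d a) :
    ∃ k, 1 ≤ k ∧ Anal (chain a k) g := by
  by_contra h
  push_neg at h
  have hroot : ∀ k : ℕ, (g.denom).IsRoot (chain a (k + 1)) := by
    intro k
    by_contra hr
    exact (h (k + 1) (by omega)) ⟨_, g.num, g.denom, hr, (RatFunc.num_div_denom g).symm, rfl⟩
  have hinj : Function.Injective (fun k : ℕ => chain a (k + 1)) := by
    intro k l he
    have := chain_inj hd hp he
    omega
  have hfin : (↑(g.denom.roots.toFinset) : Set ℂ).Finite :=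
    (g.denom.roots.toFinset).finite_toSet
  have : (↑(g.denom.roots.toFinset) : Set ℂ).Infinite :=
    Set.infinite_of_injective_forall_mem hinj (fun k => by
      simp only [Multiset.mem_toFinset, Finset.coe_sort_coe, Finset.mem_coe]
      exact Polynomial.mem_roots'.2 ⟨RatFunc.denom_ne_zero g, hroot k⟩)
  exact this hfin

lemma g_anal (m : ℕ) (c : ℕ → ℂ) {g : K} (hg : Phi g = g - Sfun m c) {M : ℕ}
    (hmax : ∀ j ∈ (Finset.range (m + 1)).erase 1, c j ≠ 0 → j ≤ M)
    {d : ℕ} {a : ℂ} (hd : 1 ≤ d) (hMd : M ≤ d) (hp : Prim d a) : Anal a g := by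
  have hSanal : ∀ k : ℕ, 1 ≤ k → Anal (chain a k) (Sfun m c) := by
    intro k hk
    apply S_anal
    intro j hj hcj
    exact (prim_chain hd hp k).2 j (by have := hmax j hj hcj; omega)
  have step : ∀ k, Anal (chain a (k + 1)) g → Anal (chain a k) g := by
    intro k hk
    have := descent m c hg hk (hSanal (k + 1) (by omega))
    rwa [chain_sq] at this
  have down : ∀ k, Anal (chain a k) g → Anal a g := by
    intro k
    induction k with
    | zero => exact id
    | succ k ih => exact fun h => ih (step k h)
  obtain ⟨k, -, hk⟩ := exists_base g hd hp
  exact down k hk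

lemma V_lemma (m : ℕ) (c : ℕ → ℂ) {M : ℕ} (hM : M ∈ (Finset.range (m + 1)).erase 1)
    (hmax : ∀ j ∈ (Finset.range (m + 1)).erase 1, c j ≠ 0 → j ≤ M)
    {a : ℂ} (ha1 : a ^ 2 ^ M = 1) (ha2 : ∀ i < M, a ^ 2 ^ i ≠ 1) :
    AnalV a (algebraMap ℂ[X] K (X - Polynomial.C a) * Sfun m c)
      (-(c M * a ^ 2) / 2 ^ M) := by
  classical
  rw [Sfun, Finset.mul_sum]
  have key : AnalV a
      (∑ j ∈ (Finset.range (m + 1)).erase 1,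
        algebraMap ℂ[X] K (X - Polynomial.C a)
          * (RatFunc.C (c j) * RatFunc.X / (1 - RatFunc.X ^ 2 ^ j)))
      (∑ j ∈ (Finset.range (m + 1)).erase 1,
        if j = M then -(c M * a ^ 2) / 2 ^ M else 0) := by
    refine AnalV.sum fun j hj => ?_
    by_cases hjM : j = M
    · subst hjM
      simpa using pole_term_analV (c j) j a ha1
    · rw [if_neg hjM]
      by_cases hcj : c j = 0
      · exact ((AnalV.poly a (X - Polynomial.C a)).mul
          (term_analV (c j) j a (Or.inr hcj))).congr (by simp [hcj])
      · have hjM' : j < M := lt_of_le_of_ne (hmax j hj hcj) hjM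
        exact ((AnalV.poly a (X - Polynomial.C a)).mul
          (term_analV (c j) j a (Or.inl (ha2 j hjM')))).congr (by simp)
  refine key.congr ?_
  rw [Finset.sum_ite_eq' ((Finset.range (m + 1)).erase 1) M
    (fun _ => -(c M * a ^ 2) / 2 ^ M), if_pos hM]

lemma key_val (m : ℕ) (c : ℕ → ℂ) {g : K} (hg : Phi g = g - Sfun m c)
    {a v : ℂ} (hga : Anal a g)
    (hS : AnalV a (algebraMap ℂ[X] K (X - Polynomial.C a) * Sfun m c) v) :
    AnalV a (Phi ((RatFunc.X - RatFunc.C (a ^ 2)) * g)) (-(2 * a * v)) := by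
  obtain ⟨vg, hvg⟩ := hga
  have hW : (RatFunc.X - RatFunc.C (a ^ 2)) * g
      = algebraMap ℂ[X] K (X - Polynomial.C (a ^ 2)) * g := by
    rw [map_sub, RatFunc.algebraMap_X, RatFunc.algebraMap_C]
  have hfact : ((X : ℂ[X]) - Polynomial.C (a ^ 2)).comp (X ^ 2)
      = (X - Polynomial.C a) * (X + Polynomial.C a) := by
    rw [Polynomial.sub_comp, Polynomial.X_comp, Polynomial.C_comp, map_pow]
    ring
  have hPhiW : Phi ((RatFunc.X - RatFunc.C (a ^ 2)) * g)
      = algebraMap ℂ[X] K (X + Polynomial.C a)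
        * (algebraMap ℂ[X] K (X - Polynomial.C a) * g
          - algebraMap ℂ[X] K (X - Polynomial.C a) * Sfun m c) := by
    rw [hW, map_mul, Phi_poly, hfact, hg, map_mul]
    ring
  rw [hPhiW]
  refine ((AnalV.poly a (X + Polynomial.C a)).mul
    (((AnalV.poly a (X - Polynomial.C a)).mul hvg).sub hS)).congr ?_
  simp only [Polynomial.eval_add, Polynomial.eval_sub, Polynomial.eval_X, Polynomial.eval_C]
  ring

end NRS

open NRS

/-- For complex numbers `c_j`, `j ∈ {0, 2, 3, …, m}`, not all zero, no rational
function `g ∈ ℂ(z)` satisfies `g(z²) = g(z) − Σ_{j∈{0,2,…,m}} c_j·z/(1 − z^(2^j))`.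
Here `g(z²)` is expressed as the evaluation of `g` at `X²` in `ℂ(X)`
(note that the denominator of `g` never evaluates to `0` at `X²`, so this
evaluation is the honest substitution). -/
theorem no_ratFunc_solution_G2j_inhomog
    (m : ℕ) (c : ℕ → ℂ) (hc : ∃ j ∈ (Finset.range (m + 1)).erase 1, c j ≠ 0) :
    ¬ ∃ g : RatFunc ℂ,
        RatFunc.eval RatFunc.C (RatFunc.X ^ 2) g =
          g - ∑ j ∈ (Finset.range (m + 1)).erase 1,
            RatFunc.C (c j) * RatFunc.X / (1 - RatFunc.X ^ (2 ^ j)) := by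
  classical
  rintro ⟨g, hg0⟩
  rw [NRS.eval_eq_Phi] at hg0
  have hg : Phi g = g - Sfun m c := hg0
  have hFc : (((Finset.range (m + 1)).erase 1).filter fun j => c j ≠ 0).Nonempty := by
    obtain ⟨j, hj, hcj⟩ := hc
    exact ⟨j, Finset.mem_filter.2 ⟨hj, hcj⟩⟩
  set M := (((Finset.range (m + 1)).erase 1).filter fun j => c j ≠ 0).max' hFc with hMdef
  have hMF : M ∈ ((Finset.range (m + 1)).erase 1).filter fun j => c j ≠ 0 :=
    Finset.max'_mem _ hFc
  have hMJ : M ∈ (Finset.range (m + 1)).erase 1 := (Finset.mem_filter.1 hMF).1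
  have hcM : c M ≠ 0 := (Finset.mem_filter.1 hMF).2
  have hmax : ∀ j ∈ (Finset.range (m + 1)).erase 1, c j ≠ 0 → j ≤ M := fun j hj hcj =>
    Finset.le_max' _ j (Finset.mem_filter.2 ⟨hj, hcj⟩)
  have hM1 : M ≠ 1 := (Finset.mem_erase.1 hMJ).1
  have h2M : ((2 : ℂ) ^ M) ≠ 0 := pow_ne_zero _ two_ne_zero
  by_cases hM0 : M = 0
  · -- case M = 0
    have hprim : Prim 1 (-1 : ℂ) := by
      refine ⟨by norm_num, fun i hi => ?_⟩
      interval_cases i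
      norm_num
    have hA2 : Anal (-1) g := g_anal m c hg hmax (le_refl 1) (by omega) hprim
    have hS2 : Anal (-1) (Sfun m c) := by
      refine S_anal m c (-1) fun j hj hcj => ?_
      have hj0 : j = 0 := by have := hmax j hj hcj; omega
      subst hj0
      norm_num
    have hA1 : Anal 1 g := by
      have := descent m c hg hA2 hS2
      norm_num at this
      exact this
    have hV1 := V_lemma m c hMJ hmax (a := 1) (by norm_num) (fun i hi => absurd hi (by omega))
    obtain ⟨w, hw⟩ := hS2
    have hV2 : AnalV (-1 : ℂ)
        (algebraMap (Polynomial ℂ) K (Polynomial.X - Polynomial.C (-1)) * Sfun m c) 0 :=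
      ((AnalV.poly (-1) (Polynomial.X - Polynomial.C (-1))).mul hw).congr (by simp)
    have k1 := key_val m c hg hA1 hV1
    have k2 := key_val m c hg hA2 hV2
    have hsq : ((-1 : ℂ)) ^ 2 = (1 : ℂ) ^ 2 := by norm_num
    rw [hsq] at k2
    obtain ⟨r, hr⟩ := Anal.of_phi (⟨_, k1⟩ : Anal 1 (Phi ((RatFunc.X - RatFunc.C ((1:ℂ) ^ 2)) * g)))
    have hr' : AnalV ((-1 : ℂ) ^ 2) ((RatFunc.X - RatFunc.C ((1:ℂ) ^ 2)) * g) r := by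
      rw [hsq]; exact hr
    have e1 := k1.unique (AnalV.phi hr)
    have e2 := k2.unique (AnalV.phi hr')
    have : -(2 * 1 * (-(c M * (1:ℂ) ^ 2) / 2 ^ M)) = -(2 * (-1) * 0) := e1.trans e2.symm
    rw [hM0] at this
    norm_num at this
    exact hcM (by rw [hM0]; exact this)
  · -- case M ≥ 2
    have hM2 : 2 ≤ M := by omega
    obtain ⟨ζ, hζ⟩ : ∃ ζ : ℂ, IsPrimitiveRoot ζ (2 ^ M) :=
      ⟨_, Complex.isPrimitiveRoot_exp (2 ^ M) (Nat.two_pow_pos M).ne'⟩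
    have hp1 : Prim M ζ := by
      refine ⟨hζ.pow_eq_one, fun i hi => ?_⟩
      exact hζ.pow_ne_one_of_pos_of_lt (Nat.two_pow_pos i).ne' (Nat.pow_lt_pow_right one_lt_two hi)
    have hζ0 : ζ ≠ 0 := by
      intro h
      have := hp1.1
      rw [h, zero_pow (Nat.two_pow_pos M).ne'] at this
      exact zero_ne_one this
    have heven : ∀ k : ℕ, 1 ≤ k → Even (2 ^ k) := fun k hk =>
      (Nat.even_pow).2 ⟨even_two, by omega⟩
    have hp2 : Prim M (-ζ) := by
      constructor
      · rw [(heven M (by omega)).neg_pow]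
        exact hp1.1
      · intro i hi
        match i with
        | 0 =>
          simp only [pow_zero, pow_one]
          intro h
          have hζm1 : ζ = -1 := by linear_combination -h
          refine hp1.2 1 (by omega) ?_
          rw [hζm1]
          norm_num
        | i + 1 =>
          rw [(heven (i + 1) (by omega)).neg_pow]
          exact hp1.2 (i + 1) hi
    have hA1 : Anal ζ g := g_anal m c hg hmax (by omega) (le_refl M) hp1
    have hA2 : Anal (-ζ) g := g_anal m c hg hmax (by omega) (le_refl M) hp2
    have hV1 := V_lemma m c hMJ hmax hp1.1 hp1.2
    have hV2 := V_lemma m c hMJ hmax hp2.1 hp2.2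
    have k1 := key_val m c hg hA1 hV1
    have k2 := key_val m c hg hA2 hV2
    rw [neg_sq] at k2
    obtain ⟨r, hr⟩ := Anal.of_phi (⟨_, k1⟩ : Anal ζ (Phi ((RatFunc.X - RatFunc.C (ζ ^ 2)) * g)))
    have hr' : AnalV ((-ζ) ^ 2) ((RatFunc.X - RatFunc.C (ζ ^ 2)) * g) r := by
      rw [neg_sq]; exact hr
    have e1 := k1.unique (AnalV.phi hr)
    have e2 := k2.unique (AnalV.phi hr')
    have e3 := e1.trans e2.symm
    have h4 : (4 : ℂ) * ζ * (-(c M * ζ ^ 2) / 2 ^ M) = 0 := by linear_combination -e3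
    have h7 : (4 : ℂ) * ζ * -(c M * ζ ^ 2) = 0 :=
      (_root_.div_eq_zero_iff.mp (by rw [← h4]; ring)).resolve_right h2M
    have hor : ζ = 0 ∨ c M = 0 := by
      rcases mul_eq_zero.1 h7 with h | h
      · rcases mul_eq_zero.1 h with h | h
        · norm_num at h
        · exact Or.inl h
      · rw [neg_eq_zero] at h
        rcases mul_eq_zero.1 h with h | h
        · exact Or.inr h
        · exact Or.inl (pow_eq_zero_iff (by norm_num) |>.1 h)
    rcases hor with h | h
    · exact hζ0 h
    · exact hcM h
end
end

section
/- Let d ≥ 3 be an integer and let (n_1, n_2) ∈ ℤ² with (n_1, n_2) ≠ (0, 0). Then there is no nonzero rational function r ∈ ℂ(z) satisfying r(z^d) = (1 − z)^{−n_1}·(1 + z²)^{−n_2}·r(z). -/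
open Polynomial RatFunc Complex
noncomputable def vord (a : ℂ) (r : RatFunc ℂ) : ℤ :=
  (r.num.rootMultiplicity a : ℤ) - r.denom.rootMultiplicity a

lemma vord_div (a : ℂ) {p q : ℂ[X]} (hp : p ≠ 0) (hq : q ≠ 0) :
    vord a (algebraMap ℂ[X] (RatFunc ℂ) p / algebraMap ℂ[X] (RatFunc ℂ) q) =
      (p.rootMultiplicity a : ℤ) - q.rootMultiplicity a := by
  set r : RatFunc ℂ := algebraMap ℂ[X] (RatFunc ℂ) p / algebraMap ℂ[X] (RatFunc ℂ) q with hr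
  have hrne : r ≠ 0 := div_ne_zero (RatFunc.algebraMap_ne_zero hp) (RatFunc.algebraMap_ne_zero hq)
  have key : r.num * q = p * r.denom := by
    have h0 : algebraMap ℂ[X] (RatFunc ℂ) r.num / algebraMap ℂ[X] (RatFunc ℂ) r.denom =
        algebraMap ℂ[X] (RatFunc ℂ) p / algebraMap ℂ[X] (RatFunc ℂ) q := by
      rw [RatFunc.num_div_denom]
    rw [div_eq_div_iff (RatFunc.algebraMap_ne_zero r.denom_ne_zero)
      (RatFunc.algebraMap_ne_zero hq), ← map_mul, ← map_mul] at h0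
    exact RatFunc.algebraMap_injective ℂ h0
  have h2 : (r.num * q).rootMultiplicity a = (p * r.denom).rootMultiplicity a := by rw [key]
  rw [Polynomial.rootMultiplicity_mul (mul_ne_zero (RatFunc.num_ne_zero hrne) hq),
      Polynomial.rootMultiplicity_mul (mul_ne_zero hp r.denom_ne_zero)] at h2
  unfold vord
  omega

lemma vord_algebraMap (a : ℂ) {p : ℂ[X]} (hp : p ≠ 0) :
    vord a (algebraMap ℂ[X] (RatFunc ℂ) p) = p.rootMultiplicity a := by
  have h1 : (1 : ℂ[X]) ≠ 0 := one_ne_zero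
  have := vord_div a hp h1
  simp only [map_one, div_one] at this
  rw [this]
  have : (1 : ℂ[X]) = Polynomial.C 1 := by simp
  rw [this, Polynomial.rootMultiplicity_C]
  ring

lemma vord_mul (a : ℂ) {r s : RatFunc ℂ} (hr : r ≠ 0) (hs : s ≠ 0) :
    vord a (r * s) = vord a r + vord a s := by
  have key : r * s = algebraMap ℂ[X] (RatFunc ℂ) (r.num * s.num) /
      algebraMap ℂ[X] (RatFunc ℂ) (r.denom * s.denom) := by
    rw [map_mul, map_mul, ← div_mul_div_comm, RatFunc.num_div_denom, RatFunc.num_div_denom]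
  rw [key, vord_div a (mul_ne_zero (RatFunc.num_ne_zero hr) (RatFunc.num_ne_zero hs))
    (mul_ne_zero r.denom_ne_zero s.denom_ne_zero),
    Polynomial.rootMultiplicity_mul (mul_ne_zero (RatFunc.num_ne_zero hr) (RatFunc.num_ne_zero hs)),
    Polynomial.rootMultiplicity_mul (mul_ne_zero r.denom_ne_zero s.denom_ne_zero)]
  unfold vord; push_cast; ring

lemma vord_inv (a : ℂ) {r : RatFunc ℂ} (hr : r ≠ 0) : vord a r⁻¹ = - vord a r := by
  have key : r⁻¹ = algebraMap ℂ[X] (RatFunc ℂ) r.denom / algebraMap ℂ[X] (RatFunc ℂ) r.num := by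
    nth_rewrite 1 [← RatFunc.num_div_denom r]
    rw [inv_div]
  rw [key, vord_div a r.denom_ne_zero (RatFunc.num_ne_zero hr)]
  unfold vord; ring

lemma vord_pow (a : ℂ) {r : RatFunc ℂ} (hr : r ≠ 0) (n : ℕ) :
    vord a (r ^ n) = n * vord a r := by
  induction n with
  | zero => simp [vord]
  | succ k ih =>
      rw [pow_succ, vord_mul a (pow_ne_zero k hr) hr, ih]; push_cast; ring

lemma vord_zpow (a : ℂ) {r : RatFunc ℂ} (hr : r ≠ 0) (n : ℤ) :
    vord a (r ^ n) = n * vord a r := by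
  cases n with
  | ofNat k => simpa using vord_pow a hr k
  | negSucc k =>
      rw [zpow_negSucc, vord_inv a (pow_ne_zero _ hr), vord_pow a hr]
      simp [Int.negSucc_eq]; push_cast; ring

lemma vord_support_finite {r : RatFunc ℂ} (hr : r ≠ 0) :
    {a : ℂ | vord a r ≠ 0}.Finite := by
  apply Set.Finite.subset ((Polynomial.finite_setOf_isRoot (RatFunc.num_ne_zero hr)).union
    (Polynomial.finite_setOf_isRoot r.denom_ne_zero))
  intro a ha
  by_contra hmem
  simp only [Set.mem_union, Set.mem_setOf_eq, not_or] at hmem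
  have h1 := Polynomial.rootMultiplicity_eq_zero hmem.1
  have h2 := Polynomial.rootMultiplicity_eq_zero hmem.2
  simp only [Set.mem_setOf_eq, vord, h1, h2] at ha
  omega

-- rootMultiplicity of X^d - C(a^d) at a is 1, for a ≠ 0, d ≥ 1
lemma rm_X_pow_sub_C {d : ℕ} (hd : 1 ≤ d) {a : ℂ} (ha : a ≠ 0) :
    ((X : ℂ[X]) ^ d - Polynomial.C (a ^ d)).rootMultiplicity a = 1 := by
  have hne : (X : ℂ[X]) ^ d - Polynomial.C (a ^ d) ≠ 0 := X_pow_sub_C_ne_zero (by omega : 0 < d) _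
  have hroot : ((X : ℂ[X]) ^ d - Polynomial.C (a ^ d)).IsRoot a := by
    simp [Polynomial.IsRoot]
  have h1 : 0 < ((X : ℂ[X]) ^ d - Polynomial.C (a ^ d)).rootMultiplicity a :=
    (Polynomial.rootMultiplicity_pos hne).mpr hroot
  have h2 : ¬ 1 < ((X : ℂ[X]) ^ d - Polynomial.C (a ^ d)).rootMultiplicity a := by
    rw [Polynomial.one_lt_rootMultiplicity_iff_isRoot hne]
    rintro ⟨-, hder⟩
    simp only [Polynomial.derivative_sub, Polynomial.derivative_C, Polynomial.derivative_X_pow,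
      sub_zero, Polynomial.IsRoot, Polynomial.eval_mul, Polynomial.eval_pow, Polynomial.eval_X,
      Polynomial.eval_natCast, mul_eq_zero, Polynomial.eval_C] at hder
    rcases hder with h | h
    · exact (Nat.cast_ne_zero.mpr (by omega : d ≠ 0) : (d:ℂ) ≠ 0) h
    · exact pow_ne_zero _ ha h
  omega

lemma rm_pow {p : ℂ[X]} (hp : p ≠ 0) (a : ℂ) (n : ℕ) :
    (p ^ n).rootMultiplicity a = n * p.rootMultiplicity a := by
  induction n with
  | zero => simp [Polynomial.rootMultiplicity_C]
  | succ k ih =>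
      rw [pow_succ, Polynomial.rootMultiplicity_mul (mul_ne_zero (pow_ne_zero k hp) hp), ih]
      ring

lemma rm_comp {d : ℕ} (hd : 1 ≤ d) {a : ℂ} (ha : a ≠ 0) {p : ℂ[X]} (hp : p ≠ 0) :
    (p.comp ((X : ℂ[X]) ^ d)).rootMultiplicity a = p.rootMultiplicity (a ^ d) := by
  obtain ⟨q, hq, hndvd⟩ := p.exists_eq_pow_rootMultiplicity_mul_and_not_dvd hp (a ^ d)
  have hqe : q.eval (a ^ d) ≠ 0 := by
    intro h
    exact hndvd (Polynomial.dvd_iff_isRoot.mpr h)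
  have hq0 : q ≠ 0 := fun h => hqe (by simp [h])
  set m := p.rootMultiplicity (a ^ d) with hm
  have hcomp : p.comp ((X : ℂ[X]) ^ d) =
      ((X : ℂ[X]) ^ d - Polynomial.C (a ^ d)) ^ m * q.comp ((X : ℂ[X]) ^ d) := by
    conv_lhs => rw [hq]
    rw [Polynomial.mul_comp, Polynomial.pow_comp, Polynomial.sub_comp, Polynomial.X_comp,
      Polynomial.C_comp]
  have hb : ((X : ℂ[X]) ^ d - Polynomial.C (a ^ d)) ≠ 0 := X_pow_sub_C_ne_zero (by omega : 0 < d) _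
  have hcq : q.comp ((X : ℂ[X]) ^ d) ≠ 0 := by
    intro h
    have h' : (q.comp ((X : ℂ[X]) ^ d)).eval a = q.eval (a ^ d) := by
      simp [Polynomial.eval_comp]
    rw [h] at h'
    exact hqe (by simpa using h'.symm)
  rw [hcomp, Polynomial.rootMultiplicity_mul (mul_ne_zero (pow_ne_zero _ hb) hcq)]
  have h1 : (((X : ℂ[X]) ^ d - Polynomial.C (a ^ d)) ^ m).rootMultiplicity a = m := by
    rw [rm_pow hb, rm_X_pow_sub_C hd ha, mul_one]
  have h2 : (q.comp ((X : ℂ[X]) ^ d)).rootMultiplicity a = 0 := by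
    apply Polynomial.rootMultiplicity_eq_zero
    simp [Polynomial.IsRoot, Polynomial.eval_comp, hqe]
  rw [h1, h2, add_zero]

-- the substitution r ↦ r(X^d) expressed via num/denom
lemma eval_pow_eq {p : ℂ[X]} (d : ℕ) :
    Polynomial.eval₂ (RatFunc.C (K := ℂ)) (RatFunc.X ^ d) p =
      algebraMap ℂ[X] (RatFunc ℂ) (p.comp ((X : ℂ[X]) ^ d)) := by
  rw [Polynomial.comp, Polynomial.hom_eval₂]
  rw [RatFunc.algebraMap_comp_C]
  congr 1
  rw [map_pow, RatFunc.algebraMap_X]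

lemma one_sub_X_ne : (1 - RatFunc.X : RatFunc ℂ) ≠ 0 := by
  have : (1 - RatFunc.X : RatFunc ℂ) = algebraMap ℂ[X] (RatFunc ℂ) (1 - Polynomial.X) := by
    rw [map_sub, map_one, RatFunc.algebraMap_X]
  rw [this]
  apply RatFunc.algebraMap_ne_zero
  intro h
  have := congrArg (Polynomial.coeff · 1) h
  simp [Polynomial.coeff_one] at this

lemma one_add_X_sq_ne : (1 + RatFunc.X ^ 2 : RatFunc ℂ) ≠ 0 := by
  have : (1 + RatFunc.X ^ 2 : RatFunc ℂ) = algebraMap ℂ[X] (RatFunc ℂ) (1 + Polynomial.X ^ 2) := by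
    rw [map_add, map_one, map_pow, RatFunc.algebraMap_X]
  rw [this]
  apply RatFunc.algebraMap_ne_zero
  intro h
  have := congrArg (Polynomial.coeff · 2) h
  simp [Polynomial.coeff_one] at this

open Classical in
lemma vord_one_sub_X (a : ℂ) :
    vord a (1 - RatFunc.X : RatFunc ℂ) = if a = 1 then 1 else 0 := by
  have h1 : (1 - RatFunc.X : RatFunc ℂ) = algebraMap ℂ[X] (RatFunc ℂ) (1 - Polynomial.X) := by
    rw [map_sub, map_one, RatFunc.algebraMap_X]
  have hp : (1 - Polynomial.X : ℂ[X]) ≠ 0 := by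
    intro h
    have := congrArg (Polynomial.coeff · 1) h
    simp [Polynomial.coeff_one] at this
  rw [h1, vord_algebraMap a hp]
  have h2 : (1 - Polynomial.X : ℂ[X]) = Polynomial.C (-1) * (Polynomial.X - Polynomial.C 1) := by
    rw [Polynomial.C_neg, Polynomial.C_1]
    ring
  rw [h2, Polynomial.rootMultiplicity_mul (by
    apply mul_ne_zero
    · simp
    · exact Polynomial.X_sub_C_ne_zero 1), Polynomial.rootMultiplicity_C,
    Polynomial.rootMultiplicity_X_sub_C]
  split <;> simp

open Classical in
lemma vord_one_add_X_sq (a : ℂ) :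
    vord a (1 + RatFunc.X ^ 2 : RatFunc ℂ) =
      (if a = Complex.I then 1 else 0) + (if a = -Complex.I then 1 else 0) := by
  have h1 : (1 + RatFunc.X ^ 2 : RatFunc ℂ) = algebraMap ℂ[X] (RatFunc ℂ) (1 + Polynomial.X ^ 2) := by
    rw [map_add, map_one, map_pow, RatFunc.algebraMap_X]
  have hp : (1 + Polynomial.X ^ 2 : ℂ[X]) ≠ 0 := by
    intro h
    have := congrArg (Polynomial.coeff · 2) h
    simp [Polynomial.coeff_one] at this
  rw [h1, vord_algebraMap a hp]
  have h2 : (1 + Polynomial.X ^ 2 : ℂ[X]) =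
      (Polynomial.X - Polynomial.C Complex.I) * (Polynomial.X - Polynomial.C (-Complex.I)) := by
    have hI : (Polynomial.C Complex.I) ^ 2 = -1 := by
      rw [sq, ← Polynomial.C_mul, Complex.I_mul_I, Polynomial.C_neg, Polynomial.C_1]
    rw [Polynomial.C_neg]
    linear_combination hI
  rw [h2, Polynomial.rootMultiplicity_mul (mul_ne_zero (Polynomial.X_sub_C_ne_zero _)
    (Polynomial.X_sub_C_ne_zero _)), Polynomial.rootMultiplicity_X_sub_C,
    Polynomial.rootMultiplicity_X_sub_C]
  split <;> split <;> simp

open Classical in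
lemma vord_relation {d : ℕ} (hd : 1 ≤ d) {n₁ n₂ : ℤ} {r : RatFunc ℂ} (hr : r ≠ 0)
    (heq : RatFunc.eval RatFunc.C (RatFunc.X ^ d) r =
      (1 - RatFunc.X) ^ (-n₁) * (1 + RatFunc.X ^ 2) ^ (-n₂) * r)
    {a : ℂ} (ha : a ≠ 0) :
    vord (a ^ d) r = -n₁ * (if a = 1 then 1 else 0)
      - n₂ * ((if a = Complex.I then 1 else 0) + (if a = -Complex.I then 1 else 0))
      + vord a r := by
  have hlhs : RatFunc.eval RatFunc.C (RatFunc.X ^ d) r =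
      algebraMap ℂ[X] (RatFunc ℂ) (r.num.comp ((Polynomial.X : ℂ[X]) ^ d)) /
      algebraMap ℂ[X] (RatFunc ℂ) (r.denom.comp ((Polynomial.X : ℂ[X]) ^ d)) := by
    rw [RatFunc.eval, eval_pow_eq, eval_pow_eq]
  have hXd : ((Polynomial.X : ℂ[X]) ^ d) ≠ Polynomial.C (((Polynomial.X : ℂ[X]) ^ d).coeff 0) := by
    intro h
    have := congrArg Polynomial.natDegree h
    simp [Polynomial.natDegree_X_pow, Polynomial.natDegree_C, (show ¬ (0 = d) by omega)] at this
    omega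
  have hnc : r.num.comp ((Polynomial.X : ℂ[X]) ^ d) ≠ 0 := by
    rw [Ne, Polynomial.comp_eq_zero_iff]
    push_neg
    exact ⟨RatFunc.num_ne_zero hr, fun _ => hXd⟩
  have hdc : r.denom.comp ((Polynomial.X : ℂ[X]) ^ d) ≠ 0 := by
    rw [Ne, Polynomial.comp_eq_zero_iff]
    push_neg
    exact ⟨r.denom_ne_zero, fun _ => hXd⟩
  have hL : vord a (RatFunc.eval RatFunc.C (RatFunc.X ^ d) r) = vord (a ^ d) r := by
    rw [hlhs, vord_div a hnc hdc, rm_comp hd ha (RatFunc.num_ne_zero hr),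
      rm_comp hd ha r.denom_ne_zero]
    rfl
  have hz1 : (1 - RatFunc.X : RatFunc ℂ) ^ (-n₁) ≠ 0 := zpow_ne_zero _ one_sub_X_ne
  have hz2 : (1 + RatFunc.X ^ 2 : RatFunc ℂ) ^ (-n₂) ≠ 0 := zpow_ne_zero _ one_add_X_sq_ne
  have hR : vord a ((1 - RatFunc.X) ^ (-n₁) * (1 + RatFunc.X ^ 2) ^ (-n₂) * r) =
      -n₁ * (if a = 1 then 1 else 0)
      - n₂ * ((if a = Complex.I then 1 else 0) + (if a = -Complex.I then 1 else 0))
      + vord a r := by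
    rw [vord_mul a (mul_ne_zero hz1 hz2) hr, vord_mul a hz1 hz2,
      vord_zpow a one_sub_X_ne, vord_zpow a one_add_X_sq_ne,
      vord_one_sub_X, vord_one_add_X_sq]
    ring
  rw [← hL, heq, hR]

lemma expI_ne {x y : ℝ} (hxy : x ≠ y) (habs : |x - y| < 2 * Real.pi) :
    Complex.exp ((x : ℂ) * Complex.I) ≠ Complex.exp ((y : ℂ) * Complex.I) := by
  intro h
  rw [Complex.exp_eq_exp_iff_exists_int] at h
  obtain ⟨n, hn⟩ := h
  have h2 : ((x - y - n * (2 * Real.pi) : ℝ) : ℂ) * Complex.I = 0 := by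
    push_cast
    linear_combination hn
  rcases mul_eq_zero.mp h2 with h3 | h3
  · have h4 : x - y - n * (2 * Real.pi) = 0 := by exact_mod_cast h3
    have hπ := Real.pi_pos
    rcases eq_or_ne n 0 with rfl | hn0
    · simp at h4
      exact hxy (by linarith)
    · have ha : (1 : ℝ) ≤ |(n : ℝ)| := by exact_mod_cast Int.one_le_abs hn0
      have hb : |x - y| = |(n : ℝ)| * (2 * Real.pi) := by
        rw [show x - y = n * (2 * Real.pi) by linarith, abs_mul,
          abs_of_pos (show (0:ℝ) < 2 * Real.pi by linarith)]
      nlinarith [abs_nonneg (x - y)]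
  · exact Complex.I_ne_zero h3

lemma expI_pow (x : ℝ) (n : ℕ) :
    Complex.exp ((x : ℂ) * Complex.I) ^ n = Complex.exp (((n * x : ℝ) : ℂ) * Complex.I) := by
  rw [← Complex.exp_nat_mul]
  congr 1
  push_cast
  ring

lemma exp_half_pi_eq : Complex.exp (((Real.pi / 2 : ℝ) : ℂ) * Complex.I) = Complex.I := by
  rw [Complex.exp_mul_I, ← Complex.ofReal_cos, ← Complex.ofReal_sin,
    Real.cos_pi_div_two, Real.sin_pi_div_two]
  simp

lemma exp_neg_half_pi_eq :
    Complex.exp (((-(Real.pi / 2) : ℝ) : ℂ) * Complex.I) = -Complex.I := by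
  rw [Complex.exp_mul_I, ← Complex.ofReal_cos, ← Complex.ofReal_sin,
    Real.cos_neg, Real.sin_neg, Real.cos_pi_div_two, Real.sin_pi_div_two]
  simp

lemma exp_pi_eq : Complex.exp (((Real.pi : ℝ) : ℂ) * Complex.I) = -1 :=
  Complex.exp_pi_mul_I

lemma vord_chain {d : ℕ} (hd : 3 ≤ d) {r : RatFunc ℂ}
    (R' : ∀ a : ℂ, a ≠ 0 → a ≠ Complex.I → a ≠ -Complex.I → vord (a ^ d) r = vord a r)
    {θ : ℝ} (hθ : θ ≠ 0) (hθabs : |θ| ≤ Real.pi) (m : ℕ) :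
    vord (Complex.exp (((θ / (d : ℝ) ^ m : ℝ) : ℂ) * Complex.I)) r =
      vord (Complex.exp ((θ : ℂ) * Complex.I)) r := by
  have hπ := Real.pi_pos
  induction m with
  | zero => norm_num
  | succ k ih =>
      have hdk : (3 : ℝ) ≤ (d : ℝ) ^ (k + 1) := by
        calc (3:ℝ) ≤ (d : ℝ) := by exact_mod_cast hd
        _ ≤ (d : ℝ) ^ (k+1) := by
          apply le_self_pow₀ (by exact_mod_cast (by omega : 1 ≤ d)) (by omega)
      have hdkpos : (0 : ℝ) < (d : ℝ) ^ (k + 1) := by linarith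
      have hxabs : |θ / (d : ℝ) ^ (k+1)| ≤ Real.pi / 3 := by
        rw [abs_div, abs_of_pos hdkpos, div_le_div_iff₀ hdkpos (by norm_num)]
        nlinarith [abs_nonneg θ]
      obtain ⟨hl, hr2⟩ := abs_le.mp hxabs
      have ha0 : Complex.exp (((θ / (d:ℝ) ^ (k+1) : ℝ) : ℂ) * Complex.I) ≠ 0 :=
        Complex.exp_ne_zero _
      have haI : Complex.exp (((θ / (d:ℝ) ^ (k+1) : ℝ) : ℂ) * Complex.I) ≠ Complex.I := by
        have h1 : (θ / (d:ℝ) ^ (k+1) : ℝ) ≠ Real.pi / 2 := by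
          intro h; rw [h] at hr2; linarith
        have h2 : |(θ / (d:ℝ) ^ (k+1) : ℝ) - Real.pi / 2| < 2 * Real.pi := by
          rw [abs_sub_lt_iff]; constructor <;> linarith
        have h3 := expI_ne h1 h2
        rw [exp_half_pi_eq] at h3
        exact h3
      have hanegI : Complex.exp (((θ / (d:ℝ) ^ (k+1) : ℝ) : ℂ) * Complex.I) ≠ -Complex.I := by
        have h1 : (θ / (d:ℝ) ^ (k+1) : ℝ) ≠ -(Real.pi / 2) := by
          intro h; rw [h] at hl; linarith
        have h2 : |(θ / (d:ℝ) ^ (k+1) : ℝ) - -(Real.pi / 2)| < 2 * Real.pi := by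
          rw [abs_sub_lt_iff]; constructor <;> linarith
        have h3 := expI_ne h1 h2
        rw [exp_neg_half_pi_eq] at h3
        exact h3
      have hstep := R' _ ha0 haI hanegI
      rw [expI_pow] at hstep
      have harg : ((d : ℝ) * (θ / (d:ℝ) ^ (k+1)) : ℝ) = θ / (d:ℝ) ^ k := by
        have hd0 : (d : ℝ) ≠ 0 := by positivity
        field_simp
        ring
      rw [harg] at hstep
      rw [← ih, ← hstep]

lemma vord_exp_zero {d : ℕ} (hd : 3 ≤ d) {r : RatFunc ℂ} (hr : r ≠ 0)
    (R' : ∀ a : ℂ, a ≠ 0 → a ≠ Complex.I → a ≠ -Complex.I → vord (a ^ d) r = vord a r)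
    {θ : ℝ} (hθ : θ ≠ 0) (hθabs : |θ| ≤ Real.pi) :
    vord (Complex.exp ((θ : ℂ) * Complex.I)) r = 0 := by
  by_contra hc
  have hπ := Real.pi_pos
  have hbound : ∀ m : ℕ, |θ / (d : ℝ) ^ (m + 1)| ≤ Real.pi / 3 := by
    intro m
    have hdk : (3 : ℝ) ≤ (d : ℝ) ^ (m + 1) := by
      calc (3:ℝ) ≤ (d : ℝ) := by exact_mod_cast hd
      _ ≤ (d : ℝ) ^ (m+1) := by
        apply le_self_pow₀ (by exact_mod_cast (by omega : 1 ≤ d)) (by omega)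
    rw [abs_div, abs_of_pos (show (0:ℝ) < (d:ℝ) ^ (m+1) by linarith),
      div_le_div_iff₀ (by linarith) (by norm_num)]
    nlinarith [abs_nonneg θ]
  have hinj : Function.Injective
      (fun m : ℕ => Complex.exp (((θ / (d : ℝ) ^ (m + 1) : ℝ) : ℂ) * Complex.I)) := by
    intro m m' h
    by_contra hne
    have hxy : θ / (d : ℝ) ^ (m + 1) ≠ θ / (d : ℝ) ^ (m' + 1) := by
      intro heq
      apply hne
      have hp1 : (0:ℝ) < (d : ℝ) ^ (m + 1) := by positivity
      have hp2 : (0:ℝ) < (d : ℝ) ^ (m' + 1) := by positivity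
      rw [div_eq_div_iff hp1.ne' hp2.ne'] at heq
      have hpow : (d : ℝ) ^ (m' + 1) = (d : ℝ) ^ (m + 1) := mul_left_cancel₀ hθ heq
      have hcast : ((d ^ (m' + 1) : ℕ) : ℝ) = ((d ^ (m + 1) : ℕ) : ℝ) := by push_cast; exact hpow
      have := Nat.pow_right_injective (by omega : 2 ≤ d) (Nat.cast_injective hcast)
      omega
    obtain ⟨l1, r1⟩ := abs_le.mp (hbound m)
    obtain ⟨l2, r2⟩ := abs_le.mp (hbound m')
    exact expI_ne hxy (by rw [abs_sub_lt_iff]; constructor <;> linarith) h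
  have hmem : ∀ m : ℕ,
      (fun m : ℕ => Complex.exp (((θ / (d : ℝ) ^ (m + 1) : ℝ) : ℂ) * Complex.I)) m ∈
        {a : ℂ | vord a r ≠ 0} := by
    intro m
    simp only [Set.mem_setOf_eq]
    rw [vord_chain hd R' hθ hθabs (m + 1)]
    exact hc
  exact (vord_support_finite hr).not_infinite
    (Set.infinite_of_injective_forall_mem hinj hmem)

/-- For `d ≥ 3` and integers `(n₁, n₂) ≠ (0, 0)`, no nonzero rational function
`r ∈ ℂ(z)` satisfies `r(z^d) = (1 − z)^(−n₁)·(1 + z²)^(−n₂)·r(z)`. Here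
`r(z^d)` is expressed as the evaluation of `r` at `X^d` in `ℂ(X)` (note that
the denominator of `r` never evaluates to `0` at `X^d`, so this evaluation is
the honest substitution). -/
theorem no_ratFunc_solution_homog_d
    (d : ℕ) (hd : 3 ≤ d) (n₁ n₂ : ℤ) (hn : (n₁, n₂) ≠ (0, 0)) :
    ¬ ∃ r : RatFunc ℂ, r ≠ 0 ∧
        RatFunc.eval RatFunc.C (RatFunc.X ^ d) r =
          (1 - RatFunc.X) ^ (-n₁) * (1 + RatFunc.X ^ 2) ^ (-n₂) * r := by
  rintro ⟨r, hr, heq⟩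
  have hd1 : 1 ≤ d := by omega
  have hπ := Real.pi_pos
  have h1I : (1 : ℂ) ≠ Complex.I := by
    intro h
    have := congrArg Complex.im h
    simp at this
  have h1nI : (1 : ℂ) ≠ -Complex.I := by
    intro h
    have := congrArg Complex.re h
    simp at this
  have hI1 : Complex.I ≠ 1 := fun h => h1I h.symm
  have hInI : Complex.I ≠ -Complex.I := by
    intro h
    have := congrArg Complex.im h
    simp at this
    norm_num at this
  have hm1 : (-1 : ℂ) ≠ 0 := by norm_num
  have hm1I : (-1 : ℂ) ≠ Complex.I := by
    intro h
    have := congrArg Complex.re h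
    simp at this
  have hm1nI : (-1 : ℂ) ≠ -Complex.I := by
    intro h
    have := congrArg Complex.re h
    simp at this
  -- Step 1 : n₁ = 0
  have hn1 : n₁ = 0 := by
    have h := vord_relation hd1 hr heq (a := 1) one_ne_zero
    rw [one_pow, if_pos rfl, if_neg h1I, if_neg h1nI] at h
    omega
  subst hn1
  have hn2 : n₂ ≠ 0 := by
    simpa using hn
  -- simplified relation
  have R' : ∀ a : ℂ, a ≠ 0 → a ≠ Complex.I → a ≠ -Complex.I →
      vord (a ^ d) r = vord a r := by
    intro a ha haI hanI
    have h := vord_relation hd1 hr heq ha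
    rw [if_neg haI, if_neg hanI] at h
    simp at h
    omega
  -- vord at I, -I and -1 all vanish
  have hvI : vord Complex.I r = 0 := by
    have := vord_exp_zero hd hr R' (θ := Real.pi / 2) (by positivity)
      (by rw [abs_of_pos (by positivity)]; linarith)
    rwa [exp_half_pi_eq] at this
  have hvnegI : vord (-Complex.I) r = 0 := by
    have := vord_exp_zero hd hr R' (θ := -(Real.pi / 2)) (neg_ne_zero.mpr (by positivity))
      (by rw [abs_neg, abs_of_pos (by positivity)]; linarith)
    rwa [exp_neg_half_pi_eq] at this
  have hvm1 : vord (-1 : ℂ) r = 0 := by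
    have := vord_exp_zero hd hr R' (θ := Real.pi) (by positivity)
      (by rw [abs_of_pos hπ])
    rwa [exp_pi_eq] at this
  -- relation at a = I
  have hIrel : vord (Complex.I ^ d) r = -n₂ := by
    have h := vord_relation hd1 hr heq (a := Complex.I) Complex.I_ne_zero
    rw [if_neg hI1, if_pos rfl, if_neg hInI, hvI] at h
    omega
  -- compute I ^ d via d % 4
  have hI4 : Complex.I ^ d = Complex.I ^ (d % 4) := by
    conv_lhs => rw [← Nat.div_add_mod d 4]
    rw [pow_add, pow_mul, Complex.I_pow_four, one_pow, one_mul]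
  have h4 : d % 4 = 0 ∨ d % 4 = 1 ∨ d % 4 = 2 ∨ d % 4 = 3 := by omega
  rcases h4 with h4 | h4 | h4 | h4
  · -- I ^ d = 1, d even : vord 1 r = -n₂, and vord (-1) r = vord 1 r
    rw [hI4, h4, pow_zero] at hIrel
    have hdeven : Even d := by
      refine Nat.even_iff.mpr ?_
      omega
    have hflip := R' (-1 : ℂ) hm1 hm1I hm1nI
    rw [hdeven.neg_one_pow] at hflip
    rw [hflip, hvm1] at hIrel
    exact hn2 (by omega)
  · rw [hI4, h4, pow_one, hvI] at hIrel
    exact hn2 (by omega)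
  · rw [hI4, h4, Complex.I_sq, hvm1] at hIrel
    exact hn2 (by omega)
  · have hI3 : Complex.I ^ 3 = -Complex.I := by
      rw [pow_succ, Complex.I_sq, neg_one_mul]
    rw [hI4, h4, hI3, hvnegI] at hIrel
    exact hn2 (by omega)
end

section
/- For every complex z with |z| < 1, T_2(z) = 1/(1 − z) − 2·f_TMM(z), that is, Π_{n≥0}(1 − z^{2^n}) = 1/(1 − z) − 2·Σ_{n≥0} t_n z^n. -/
open Finset

private lemma tm_zero_or_one (t : ℕ → ℂ)
    (ht0 : t 0 = 0) (ht2 : ∀ n, t (2 * n) = t n) (ht21 : ∀ n, t (2 * n + 1) = 1 - t n)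
    (n : ℕ) : t n = 0 ∨ t n = 1 := by
  induction n using Nat.strong_induction_on with
  | _ n ih =>
    rcases Nat.eq_zero_or_pos n with h0 | h0
    · subst h0; exact Or.inl ht0
    rcases Nat.even_or_odd n with ⟨m, hm⟩ | ⟨m, hm⟩
    · subst hm
      rw [show m + m = 2 * m by ring, ht2]
      exact ih m (by omega)
    · subst hm
      rw [ht21]
      rcases ih m (by omega) with h | h <;> rw [h] <;> simp

private lemma tm_flip (t : ℕ → ℂ)
    (ht0 : t 0 = 0) (ht2 : ∀ n, t (2 * n) = t n) (ht21 : ∀ n, t (2 * n + 1) = 1 - t n) :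
    ∀ N k, k < 2 ^ N → t (2 ^ N + k) = 1 - t k := by
  intro N
  induction N with
  | zero =>
    intro k hk
    interval_cases k
    simpa [ht0] using ht21 0
  | succ N ih =>
    intro k hk
    rcases Nat.even_or_odd k with ⟨m, hm⟩ | ⟨m, hm⟩
    · have hm' : m < 2 ^ N := by
        rw [pow_succ] at hk; omega
      have : 2 ^ (N + 1) + k = 2 * (2 ^ N + m) := by rw [pow_succ]; omega
      rw [this, ht2, ih m hm', hm, show m + m = 2 * m by ring, ht2]
    · have hm' : m < 2 ^ N := by
        rw [pow_succ] at hk; omega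
      have : 2 ^ (N + 1) + k = 2 * (2 ^ N + m) + 1 := by rw [pow_succ]; omega
      rw [this, ht21, ih m hm', hm, show 2 * m + 1 = 2 * m + 1 from rfl, ht21]

private lemma tm_finite_prod (t : ℕ → ℂ)
    (ht0 : t 0 = 0) (ht2 : ∀ n, t (2 * n) = t n) (ht21 : ∀ n, t (2 * n + 1) = 1 - t n)
    (z : ℂ) :
    ∀ N, ∏ n ∈ range N, (1 - z ^ (2 ^ n)) =
      ∑ k ∈ range (2 ^ N), (1 - 2 * t k) * z ^ k := by
  intro N
  induction N with
  | zero => simp [ht0]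
  | succ N ih =>
    rw [prod_range_succ, ih, pow_succ, mul_two, Finset.sum_range_add]
    have : ∀ k ∈ range (2 ^ N),
        (1 - 2 * t (2 ^ N + k)) * z ^ (2 ^ N + k) =
          -(z ^ (2 ^ N)) * ((1 - 2 * t k) * z ^ k) := by
      intro k hk
      rw [tm_flip t ht0 ht2 ht21 N k (mem_range.mp hk), pow_add]
      ring
    rw [Finset.sum_congr rfl this, ← Finset.mul_sum]
    ring

/-- For every complex `z` with `|z| < 1`,
`Π_{n≥0}(1 − z^(2^n)) = 1/(1 − z) − 2·Σ_{n≥0} t_n z^n`, where `(t_n)` is the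
Thue–Morse sequence given by its defining recurrences. -/
theorem T2_eq_one_div_sub_two_fTMM
    (t : ℕ → ℂ)
    (ht0 : t 0 = 0) (ht2 : ∀ n, t (2 * n) = t n) (ht21 : ∀ n, t (2 * n + 1) = 1 - t n)
    (z : ℂ) (hz : ‖z‖ < 1) :
    ∏' n : ℕ, (1 - z ^ (2 ^ n)) = 1 / (1 - z) - 2 * ∑' n : ℕ, t n * z ^ n := by
  have hz' : ‖z‖ < 1 := hz
  -- norm bound on powers
  have hwle : ∀ n : ℕ, ‖z ^ (2 ^ n)‖ ≤ ‖z‖ ^ n := by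
    intro n
    rw [norm_pow]
    exact pow_le_pow_of_le_one (norm_nonneg z) hz'.le (Nat.lt_two_pow_self (n := n)).le
  have hwlt : ∀ n : ℕ, ‖z ^ (2 ^ n)‖ < 1 := by
    intro n
    rw [norm_pow]
    exact pow_lt_one₀ (norm_nonneg z) hz' (Nat.pos_of_ne_zero (by positivity)).ne'
  have hwz : ∀ n : ℕ, ‖z ^ (2 ^ n)‖ ≤ ‖z‖ := by
    intro n
    rw [norm_pow]
    calc ‖z‖ ^ 2 ^ n ≤ ‖z‖ ^ 1 :=
          pow_le_pow_of_le_one (norm_nonneg z) hz'.le (Nat.one_le_two_pow)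
      _ = ‖z‖ := pow_one _
  -- the factors are nonzero
  have hne : ∀ n : ℕ, 1 - z ^ (2 ^ n) ≠ 0 := by
    intro n h
    have : z ^ (2 ^ n) = 1 := by
      have := sub_eq_zero.mp h
      exact this.symm
    have h1 := hwlt n
    rw [this, norm_one] at h1
    exact lt_irrefl 1 h1
  -- summability of the logs
  have hsumlog : Summable fun n : ℕ => Complex.log (1 - z ^ (2 ^ n)) := by
    refine Summable.of_norm_bounded (g := fun n => ((1 - ‖z‖)⁻¹ / 2 + 1) * ‖z‖ ^ n)
      ((summable_geometric_of_lt_one (norm_nonneg z) hz').mul_left _) ?_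
    intro n
    have hw := hwlt n
    have hw' : ‖-(z ^ (2 ^ n))‖ < 1 := by rwa [norm_neg]
    have hlog := Complex.norm_log_one_add_le hw'
    rw [show (1 : ℂ) + -(z ^ (2 ^ n)) = 1 - z ^ (2 ^ n) by ring] at hlog
    rw [norm_neg] at hlog
    set w := ‖z ^ (2 ^ n)‖ with hwdef
    have h1 : (1 - w)⁻¹ ≤ (1 - ‖z‖)⁻¹ := by
      have := hwz n
      gcongr
    have h2 : w ^ 2 ≤ w := by nlinarith [norm_nonneg (z ^ (2 ^ n))]
    have h3 : w ≤ ‖z‖ ^ n := hwle n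
    have hpos : (0:ℝ) < 1 - ‖z‖ := by linarith
    have hC : (0:ℝ) ≤ (1 - ‖z‖)⁻¹ := inv_nonneg.mpr hpos.le
    calc ‖Complex.log (1 - z ^ (2 ^ n))‖ ≤ w ^ 2 * (1 - w)⁻¹ / 2 + w := hlog
      _ ≤ w * (1 - ‖z‖)⁻¹ / 2 + w := by
          have hmm : w ^ 2 * (1 - w)⁻¹ ≤ w * (1 - ‖z‖)⁻¹ :=
            mul_le_mul h2 h1 (inv_nonneg.mpr (by linarith)) (norm_nonneg _)
          linarith
      _ = ((1 - ‖z‖)⁻¹ / 2 + 1) * w := by ring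
      _ ≤ ((1 - ‖z‖)⁻¹ / 2 + 1) * ‖z‖ ^ n := by
          have hCC : (0:ℝ) ≤ (1 - ‖z‖)⁻¹ / 2 + 1 := by linarith
          exact mul_le_mul_of_nonneg_left h3 hCC
  -- multipliability
  have hmult : Multipliable fun n : ℕ => 1 - z ^ (2 ^ n) := by
    have := Complex.multipliable_of_summable_log hsumlog
    exact this
  -- summability of the series
  have hbound01 : ∀ k, ‖t k‖ ≤ 1 := by
    intro k
    rcases tm_zero_or_one t ht0 ht2 ht21 k with h | h <;> rw [h] <;> simp
  have hs : Summable fun k : ℕ => (1 - 2 * t k) * z ^ k := by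
    refine Summable.of_norm_bounded
      ((summable_geometric_of_lt_one (norm_nonneg z) hz').mul_left 3) ?_
    intro k
    rw [norm_mul, norm_pow]
    refine mul_le_mul_of_nonneg_right ?_ (by positivity)
    calc ‖1 - 2 * t k‖ ≤ ‖(1:ℂ)‖ + ‖2 * t k‖ := norm_sub_le _ _
      _ ≤ 1 + 2 * 1 := by
          rw [norm_one, norm_mul]
          gcongr
          · simp
          · exact hbound01 k
      _ = 3 := by norm_num
  have hs2 : Summable fun k : ℕ => t k * z ^ k := by
    refine Summable.of_norm_bounded
      (summable_geometric_of_lt_one (norm_nonneg z) hz') ?_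
    intro k
    rw [norm_mul, norm_pow]
    calc ‖t k‖ * ‖z‖ ^ k ≤ 1 * ‖z‖ ^ k := by gcongr; exact hbound01 k
      _ = ‖z‖ ^ k := one_mul _
  have hs1 : Summable fun k : ℕ => z ^ k := summable_geometric_of_norm_lt_one hz'
  -- identify the product with the sum via limits
  have htendP : Filter.Tendsto (fun N => ∏ n ∈ range N, (1 - z ^ (2 ^ n)))
      Filter.atTop (nhds (∏' n : ℕ, (1 - z ^ (2 ^ n)))) :=
    hmult.hasProd.tendsto_prod_nat
  have htendS : Filter.Tendsto (fun N => ∑ k ∈ range (2 ^ N), (1 - 2 * t k) * z ^ k)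
      Filter.atTop (nhds (∑' k : ℕ, (1 - 2 * t k) * z ^ k)) :=
    (hs.hasSum.tendsto_sum_nat).comp (tendsto_pow_atTop_atTop_of_one_lt (r := (2:ℕ)) one_lt_two)
  have heq : (fun N => ∏ n ∈ range N, (1 - z ^ (2 ^ n)))
      = fun N => ∑ k ∈ range (2 ^ N), (1 - 2 * t k) * z ^ k :=
    funext (tm_finite_prod t ht0 ht2 ht21 z)
  rw [heq] at htendP
  have hPS : (∏' n : ℕ, (1 - z ^ (2 ^ n))) = ∑' k : ℕ, (1 - 2 * t k) * z ^ k :=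
    tendsto_nhds_unique htendP htendS
  rw [hPS]
  have : ∀ k : ℕ, (1 - 2 * t k) * z ^ k = z ^ k - 2 * (t k * z ^ k) := by
    intro k; ring
  rw [tsum_congr this, Summable.tsum_sub hs1 (hs2.mul_left 2), tsum_mul_left,
    tsum_geometric_of_norm_lt_one hz', one_div]
end

section
/- For every complex z with |z| < 1, G_{2,2}(z) = z·f_RPF(z), that is, Σ_{n≥0} z^{2^n}/(1 − z^{2^{n+2}}) = z·Σ_{n≥0} u_n z^n. -/
private lemma pm_pos (n k : ℕ) : 0 < 2^n * (4*k+1) := by positivity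

private lemma pm_inj : ∀ n k n' k' : ℕ, 2^n * (4*k+1) = 2^n' * (4*k'+1) → n = n' ∧ k = k' := by
  intro n
  induction n with
  | zero =>
    intro k n' k' h
    cases n' with
    | zero => simp at h; omega
    | succ s =>
      exfalso
      have h2 : (2:ℕ) ∣ 2^(s+1)*(4*k'+1) := ⟨2^s*(4*k'+1), by ring⟩
      simp only [pow_zero, one_mul] at h
      omega
  | succ s ih =>
    intro k n' k' h
    cases n' with
    | zero =>
      exfalso
      have h2 : (2:ℕ) ∣ 2^(s+1)*(4*k+1) := ⟨2^s*(4*k+1), by ring⟩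
      simp only [pow_zero, one_mul] at h
      omega
    | succ t =>
      rw [pow_succ', pow_succ', mul_assoc, mul_assoc] at h
      have h' := Nat.eq_of_mul_eq_mul_left (by norm_num) h
      obtain ⟨h1, h2⟩ := ih k t k' h'
      exact ⟨by omega, h2⟩

private lemma u_one (u : ℕ → ℂ) (hu4 : ∀ n, u (4 * n) = 1)
    (hu21 : ∀ n, u (2 * n + 1) = u n) :
    ∀ n k, u (2^n * (4*k+1) - 1) = 1 := by
  intro n
  induction n with
  | zero =>
    intro k
    have : 2^0 * (4*k+1) - 1 = 4*k := by simp
    rw [this]; exact hu4 k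
  | succ s ih =>
    intro k
    have key : 2^(s+1)*(4*k+1) = 2 * (2^s*(4*k+1)) := by rw [pow_succ']; ring
    rw [key]
    set M := 2^s*(4*k+1) with hM
    have hp : 0 < M := pm_pos s k
    have : 2*M - 1 = 2*(M-1)+1 := by omega
    rw [this, hu21]
    exact ih k

private lemma u_zero (u : ℕ → ℂ) (hu42 : ∀ n, u (4 * n + 2) = 0)
    (hu21 : ∀ n, u (2 * n + 1) = u n) :
    ∀ m, (¬ ∃ n k, m + 1 = 2^n * (4*k+1)) → u m = 0 := by
  intro m
  induction m using Nat.strong_induction_on with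
  | _ m ih =>
    intro hm
    rcases Nat.even_or_odd m with ⟨t, ht⟩ | ⟨t, ht⟩
    · rcases Nat.even_or_odd t with ⟨s, hs⟩ | ⟨s, hs⟩
      · exfalso
        exact hm ⟨0, s, by simp only [pow_zero, one_mul]; omega⟩
      · have : m = 4*s+2 := by omega
        rw [this]; exact hu42 s
    · have hmt : m = 2*t+1 := by omega
      rw [hmt, hu21]
      refine ih t (by omega) ?_
      rintro ⟨n, k, hk⟩
      refine hm ⟨n+1, k, ?_⟩
      calc m + 1 = 2*(t+1) := by omega
        _ = 2*(2^n*(4*k+1)) := by rw [hk]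
        _ = 2^(n+1)*(4*k+1) := by rw [pow_succ']; ring

/-- For every complex `z` with `|z| < 1`,
`Σ_{n≥0} z^(2^n)/(1 − z^(2^(n+2))) = z·Σ_{n≥0} u_n z^n`, where `(u_n)` is the
regular paperfolding sequence given by its defining recurrences. -/
theorem G22_eq_z_mul_fRPF
    (u : ℕ → ℂ)
    (hu4 : ∀ n, u (4 * n) = 1) (hu42 : ∀ n, u (4 * n + 2) = 0)
    (hu21 : ∀ n, u (2 * n + 1) = u n)
    (z : ℂ) (hz : ‖z‖ < 1) :
    ∑' n : ℕ, z ^ (2 ^ n) / (1 - z ^ (2 ^ (n + 2))) = z * ∑' n : ℕ, u n * z ^ n := by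
  have hz' : ‖z‖ < 1 := hz
  set e : ℕ × ℕ → ℕ := fun p => 2^p.1 * (4*p.2+1) - 1 with he
  have hep : ∀ p : ℕ × ℕ, e p + 1 = 2^p.1 * (4*p.2+1) :=
    fun p => Nat.sub_add_cancel (pm_pos p.1 p.2)
  have he_inj : Function.Injective e := by
    rintro ⟨n, k⟩ ⟨n', k'⟩ h
    have hE : e (n, k) + 1 = e (n', k') + 1 := by rw [h]
    rw [hep (n, k), hep (n', k')] at hE
    have h' : 2^n * (4*k+1) = 2^n' * (4*k'+1) := by simpa using hE
    obtain ⟨h1, h2⟩ := pm_inj n k n' k' h'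
    simp [h1, h2]
  -- summability
  have hf : Summable (fun m : ℕ => z ^ (m+1)) := by
    have := (summable_geometric_of_norm_lt_one hz').mul_left z
    refine this.congr fun m => ?_
    rw [pow_succ']
  have hg : Summable ((fun m : ℕ => z ^ (m+1)) ∘ e) := hf.comp_injective he_inj
  have hFg : (fun p : ℕ × ℕ => z ^ (2^p.1 * (4*p.2+1))) = (fun m : ℕ => z ^ (m+1)) ∘ e := by
    funext p
    simp only [Function.comp_apply, hep p]
  have hF : Summable (fun p : ℕ × ℕ => z ^ (2^p.1 * (4*p.2+1))) := by rw [hFg]; exact hg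
  -- per-term geometric series
  have hterm : ∀ n : ℕ, z ^ (2^n) / (1 - z ^ (2^(n+2))) = ∑' k : ℕ, z ^ (2^n * (4*k+1)) := by
    intro n
    have hr : ‖z ^ (2^(n+2))‖ < 1 := by
      rw [norm_pow]
      exact pow_lt_one₀ (norm_nonneg z) hz' (by positivity)
    calc z ^ (2^n) / (1 - z ^ (2^(n+2)))
        = z ^ (2^n) * (1 - z ^ (2^(n+2)))⁻¹ := div_eq_mul_inv _ _
      _ = z ^ (2^n) * ∑' k : ℕ, (z ^ (2^(n+2)))^k := by
          rw [tsum_geometric_of_norm_lt_one hr]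
      _ = ∑' k : ℕ, z ^ (2^n) * (z ^ (2^(n+2)))^k := (tsum_mul_left).symm
      _ = ∑' k : ℕ, z ^ (2^n * (4*k+1)) := by
          refine tsum_congr fun k => ?_
          rw [← pow_mul, ← pow_add]
          congr 1
          rw [pow_add]
          ring
  calc ∑' n : ℕ, z ^ (2 ^ n) / (1 - z ^ (2 ^ (n + 2)))
      = ∑' n : ℕ, ∑' k : ℕ, z ^ (2^n * (4*k+1)) := tsum_congr hterm
    _ = ∑' p : ℕ × ℕ, z ^ (2^p.1 * (4*p.2+1)) := (Summable.tsum_prod' hF fun b => hF.prod_factor b).symm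
    _ = ∑' p : ℕ × ℕ, u (e p) * z ^ (e p + 1) := by
        refine tsum_congr fun p => ?_
        rw [hep p]
        have : u (e p) = 1 := by
          have := u_one u hu4 hu21 p.1 p.2
          simpa only [he] using this
        rw [this, one_mul]
    _ = ∑' m : ℕ, u m * z ^ (m+1) := by
        refine he_inj.tsum_eq (f := fun m : ℕ => u m * z ^ (m+1)) ?_
        intro m hm
        have hum : u m ≠ 0 := fun h => hm (by simp [h])
        by_contra hr
        apply hum
        apply u_zero u hu42 hu21
        rintro ⟨n, k, hk⟩
        have hE : e (n, k) + 1 = m + 1 := by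
          rw [hep (n, k)]
          simpa using hk.symm
        exact hr ⟨(n, k), by omega⟩
    _ = ∑' m : ℕ, z * (u m * z ^ m) := by
        refine tsum_congr fun m => ?_
        rw [pow_succ']; ring
    _ = z * ∑' m : ℕ, u m * z ^ m := tsum_mul_left
end
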